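/- arXiv:1205.4749 — 6 statements merged into one kernel-verified Lean document; each statement's English description precedes it below -/
import Mathlib

section
/- Let T = (V,E) be a finite tree, β ≥ 0, and B : V → ℝ external fields. For every ordered pair of adjacent vertices (i,j) of T, the message satisfies the recursion m_{i→j} = tanh( B_i + Σ_{k ∈ ∂i \ {j}} atanh( tanh(β) · m_{k→i} ) ), where ∂i denotes the set of neighbors of i in T. -/
open Real Finset

attribute [local instance] Classical.propDecidable

/-- the inverse hyperbolic tangent `atanh x = ½ log((1+x)/(1-x))`. -/
noncomputable def atanh (x : ℝ) : ℝ := (1 / 2) * Real.log ((1 + x) / (1 - x))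

/-- spin value of a Boolean: `true ↦ +1`, `false ↦ -1`. -/
def spin (b : Bool) : ℝ := if b then 1 else -1

/-- the product `x_i x_j` of the spins at the two endpoints of an edge. -/
def edgeTerm {V : Type} (x : V → Bool) : Sym2 V → ℝ :=
  Sym2.lift ⟨fun i j => spin (x i) * spin (x j), fun i j => by ring⟩

variable {V : Type} [Fintype V]

/-- Ising Hamiltonian `β Σ_{(i,j)∈E} x_i x_j + Σ_i B_i x_i`. -/
noncomputable def ham (G : SimpleGraph V) (β : ℝ) (B : V → ℝ) (x : V → Bool) : ℝ :=
  β * ∑ e ∈ G.edgeFinset, edgeTerm x e + ∑ v, B v * spin (x v)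

/-- expectation `⟨f⟩` under the Ising measure `ν^{β,B}_G` on `{-1,+1}^V`. -/
noncomputable def isingExp (G : SimpleGraph V) (β : ℝ) (B : V → ℝ)
    (f : (V → Bool) → ℝ) : ℝ :=
  (∑ x : V → Bool, f x * Real.exp (ham G β B x)) /
    (∑ x : V → Bool, Real.exp (ham G β B x))

/-- `T_{i→j}` : the connected component of `i` in the graph obtained from `T`
by deleting the edge `{i,j}` (kept as a graph on the ambient vertex set;
vertices outside the component are isolated). -/
def msgGraph (T : SimpleGraph V) (i j : V) : SimpleGraph V where
  Adj a b := (T.deleteEdges {s(i, j)}).Adj a b ∧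
      (T.deleteEdges {s(i, j)}).Reachable a i ∧ (T.deleteEdges {s(i, j)}).Reachable b i
  symm := ⟨fun a b ⟨h, ha, hb⟩ => ⟨h.symm, hb, ha⟩⟩
  loopless := ⟨fun a h => (T.deleteEdges {s(i, j)}).loopless.irrefl a h.1⟩

/-- the external fields `B` restricted to the component `T_{i→j}` (zero elsewhere). -/
noncomputable def msgField (T : SimpleGraph V) (B : V → ℝ) (i j : V) : V → ℝ :=
  fun v => if (T.deleteEdges {s(i, j)}).Reachable v i then B v else 0

/-- the message `m_{i→j}`, i.e. `⟨x_i⟩` under the Ising measure on `T_{i→j}`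
with inverse temperature `β` and fields `B` restricted to `T_{i→j}`. -/
noncomputable def msg (T : SimpleGraph V) (β : ℝ) (B : V → ℝ) (i j : V) : ℝ :=
  isingExp (msgGraph T i j) β (msgField T B i j) (fun x => spin (x i))


lemma spin_sq (b : Bool) : spin b * spin b = 1 := by cases b <;> simp [spin]
lemma spin_abs (b : Bool) : |spin b| = 1 := by cases b <;> simp [spin]

lemma tanh_eq_exp (u : ℝ) : Real.tanh u = (exp (2*u) - 1) / (exp (2*u) + 1) := by
  have h2 : exp (2*u) = exp u * exp u := by rw [← exp_add]; ring_nf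
  rw [Real.tanh_eq_sinh_div_cosh, Real.sinh_eq, Real.cosh_eq]
  rw [div_eq_div_iff (by positivity) (by positivity)]
  have h3 : exp u * exp (-u) = 1 := by rw [← exp_add]; simp
  nlinarith [exp_pos u, exp_pos (-u)]

lemma exp_two_atanh {t : ℝ} (ht : |t| < 1) : exp (2 * atanh t) = (1+t)/(1-t) := by
  have h1 : 0 < 1 + t := by cases abs_lt.1 ht; linarith
  have h2 : 0 < 1 - t := by cases abs_lt.1 ht; linarith
  have : 2 * atanh t = Real.log ((1+t)/(1-t)) := by unfold atanh; ring
  rw [this, Real.exp_log (by positivity)]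

lemma exp_beta_spin (β : ℝ) (a b : Bool) :
    exp (β * (spin a * spin b)) = Real.cosh β + spin a * spin b * Real.sinh β := by
  cases a <;> cases b <;> simp [spin, Real.cosh_eq, Real.sinh_eq] <;> ring_nf <;>
    rw [Real.cosh_eq, Real.sinh_eq] <;> ring

variable {V : Type} [Fintype V]


noncomputable def mergeEquiv (S : Set V) : ((V → Bool) × (V → Bool)) ≃ ((V → Bool) × (V → Bool)) where
  toFun p := (fun v => if v ∈ S then p.1 v else p.2 v, fun v => if v ∈ S then p.2 v else p.1 v)
  invFun p := (fun v => if v ∈ S then p.1 v else p.2 v, fun v => if v ∈ S then p.2 v else p.1 v)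
  left_inv p := by ext v <;> by_cases h : v ∈ S <;> simp [h]
  right_inv p := by ext v <;> by_cases h : v ∈ S <;> simp [h]

/-- `F` depends only on coordinates in `S`. -/
def SpinDependsOn (S : Set V) (F : (V → Bool) → ℝ) : Prop :=
  ∀ x y : V → Bool, (∀ v ∈ S, x v = y v) → F x = F y

lemma indep_pair {S T : Set V} {F G : (V → Bool) → ℝ}
    (hF : SpinDependsOn S F) (hG : SpinDependsOn T G) (hST : Disjoint S T) :
    (Fintype.card (V → Bool) : ℝ) * ∑ x : V → Bool, F x * G x =
      (∑ x : V → Bool, F x) * (∑ x : V → Bool, G x) := by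
  classical
  have key : ∀ x y : V → Bool,
      F (fun v => if v ∈ S then x v else y v) * G (fun v => if v ∈ S then y v else x v)
        = F x * G x := by
    intro x y
    congr 1
    · exact hF _ _ (fun v hv => by simp [hv])
    · exact hG _ _ (fun v hv => by
        have : v ∉ S := fun h => Set.disjoint_left.mp hST h hv
        simp [this])
  set e := mergeEquiv S with he
  calc (Fintype.card (V → Bool) : ℝ) * ∑ x : V → Bool, F x * G x
      = ∑ x : V → Bool, ∑ _y : V → Bool, F x * G x := by
        rw [Finset.mul_sum]
        exact Finset.sum_congr rfl fun x _ => by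
          rw [Finset.sum_const, card_univ, nsmul_eq_mul]
    _ = ∑ p : (V → Bool) × (V → Bool), F (e p).1 * G (e p).2 := by
        rw [Fintype.sum_prod_type]
        exact Finset.sum_congr rfl fun x _ =>
          Finset.sum_congr rfl fun y _ => by
            simp only [he, mergeEquiv]; exact (key x y).symm
    _ = ∑ p : (V → Bool) × (V → Bool), F p.1 * G p.2 :=
        Equiv.sum_comp e (fun p => F p.1 * G p.2)
    _ = (∑ x : V → Bool, F x) * (∑ x : V → Bool, G x) := by
        rw [Fintype.sum_prod_type, Finset.sum_mul]
        exact Finset.sum_congr rfl fun x _ => by rw [Finset.mul_sum]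

lemma SpinDependsOn.mono {S S' : Set V} {F : (V → Bool) → ℝ} (h : SpinDependsOn S F) (hs : S ⊆ S') :
    SpinDependsOn S' F := fun x y hxy => h x y fun v hv => hxy v (hs hv)

lemma SpinDependsOn.prod {ι : Type} {s : Finset ι} {U : Set V} {g : ι → (V → Bool) → ℝ}
    (h : ∀ k ∈ s, SpinDependsOn U (g k)) :
    SpinDependsOn U (fun x => ∏ k ∈ s, g k x) := fun x y hxy =>
  Finset.prod_congr rfl fun k hk => h k hk x y hxy

lemma indep_prod {ι : Type} (s : Finset ι) (P : ι → Set V) (g : ι → (V → Bool) → ℝ)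
    (hdep : ∀ k ∈ s, SpinDependsOn (P k) (g k))
    (hdisj : ∀ k ∈ s, ∀ l ∈ s, k ≠ l → Disjoint (P k) (P l)) :
    (Fintype.card (V → Bool) : ℝ) ^ s.card * ∑ x : V → Bool, ∏ k ∈ s, g k x
      = (Fintype.card (V → Bool) : ℝ) * ∏ k ∈ s, ∑ x : V → Bool, g k x := by
  classical
  induction s using Finset.induction_on with
  | empty => simp [Finset.card_univ]
  | @insert a s ha ih =>
      have hU : SpinDependsOn (⋃ k ∈ s, P k) (fun x => ∏ k ∈ s, g k x) :=
        SpinDependsOn.prod fun k hk =>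
          (hdep k (Finset.mem_insert_of_mem hk)).mono
            (Set.subset_biUnion_of_mem (u := P) hk)
      have hdisjU : Disjoint (P a) (⋃ k ∈ s, P k) := by
        rw [Set.disjoint_iUnion₂_right]
        intro k hk
        exact hdisj a (Finset.mem_insert_self a s) k (Finset.mem_insert_of_mem hk)
          (fun h => ha (h ▸ hk))
      have hpair := indep_pair (hdep a (Finset.mem_insert_self a s)) hU hdisjU
      have ih' := ih (fun k hk => hdep k (Finset.mem_insert_of_mem hk))
        (fun k hk l hl => hdisj k (Finset.mem_insert_of_mem hk) l (Finset.mem_insert_of_mem hl))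
      rw [Finset.card_insert_of_notMem ha, Finset.prod_insert ha]
      have : ∑ x : V → Bool, ∏ k ∈ insert a s, g k x
          = ∑ x : V → Bool, g a x * ∏ k ∈ s, g k x :=
        Finset.sum_congr rfl fun x _ => Finset.prod_insert ha
      rw [this, pow_succ]
      calc (Fintype.card (V → Bool) : ℝ) ^ s.card * (Fintype.card (V → Bool) : ℝ) *
            ∑ x : V → Bool, g a x * ∏ k ∈ s, g k x
          = (Fintype.card (V → Bool) : ℝ) ^ s.card *
            ((∑ x : V → Bool, g a x) * ∑ x : V → Bool, ∏ k ∈ s, g k x) := by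
            rw [mul_assoc, hpair]
        _ = (∑ x : V → Bool, g a x) *
            ((Fintype.card (V → Bool) : ℝ) ^ s.card * ∑ x : V → Bool, ∏ k ∈ s, g k x) := by ring
        _ = (Fintype.card (V → Bool) : ℝ) *
            ((∑ x : V → Bool, g a x) * ∏ k ∈ s, ∑ x : V → Bool, g k x) := by rw [ih']; ring
section GraphLemmas
variable {T : SimpleGraph V}

/-- every edge of a tree is a bridge -/
lemma tree_bridge (hT : T.IsTree) {a b : V} (h : T.Adj a b) :
    ¬ (T.deleteEdges {s(a, b)}).Reachable a b := by
  have := (SimpleGraph.isAcyclic_iff_forall_adj_isBridge.mp hT.IsAcyclic) h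
  rw [SimpleGraph.isBridge_iff] at this
  exact this

/-- a walk in a reachability witness of `T_{k→i}` can be chosen avoiding `i`. -/
lemma exists_walk_avoid (hT : T.IsTree) {k i v : V} (hki : T.Adj k i)
    (h : (T.deleteEdges {s(k, i)}).Walk v k) : ∃ w : T.Walk v k, i ∉ w.support := by
  have hip : i ∉ h.support := by
    intro hi
    have : (T.deleteEdges {s(k, i)}).Reachable i k := ⟨h.dropUntil i hi⟩
    exact tree_bridge hT hki this.symm
  refine ⟨h.transfer T (fun e he => ?_), ?_⟩
  · have := h.edges_subset_edgeSet he
    rw [SimpleGraph.edgeSet_deleteEdges] at this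
    exact this.1
  · rwa [SimpleGraph.Walk.support_transfer]

/-- conversely, a walk avoiding `i` witnesses membership in `T_{k→i}`. -/
lemma reach_of_walk_avoid {k i v : V} (w : T.Walk v k) (hw : i ∉ w.support) :
    (T.deleteEdges {s(k, i)}).Reachable v k := by
  refine ⟨w.transfer _ (fun e he => ?_)⟩
  rw [SimpleGraph.edgeSet_deleteEdges]
  refine ⟨w.edges_subset_edgeSet he, ?_⟩
  intro hkie
  rw [Set.mem_singleton_iff] at hkie
  rw [hkie] at he
  exact hw (SimpleGraph.Walk.snd_mem_support_of_mem_edges w he)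

lemma sym_ne_of {i j k : V} (hij : i ≠ j) (hki : k ≠ i) (hkj : k ≠ j) :
    s(k, i) ≠ s(i, j) := by
  intro h
  rw [Sym2.eq_iff] at h
  rcases h with ⟨h1, _⟩ | ⟨h1, _⟩
  · exact hki h1
  · exact hkj h1

/-- `C_{k→i} ⊆ C_{i→j}` for `k` a neighbor of `i` other than `j`. -/
lemma comp_subset (hT : T.IsTree) {i j k v : V} (hij : T.Adj i j)
    (hki : T.Adj k i) (hkj : k ≠ j)
    (hv : (T.deleteEdges {s(k, i)}).Reachable v k) :
    (T.deleteEdges {s(i, j)}).Reachable v i := by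
  obtain ⟨p⟩ := hv
  obtain ⟨w, hw⟩ := exists_walk_avoid hT hki p
  refine ⟨(w.concat hki).transfer _ (fun e he => ?_)⟩
  rw [SimpleGraph.Walk.edges_concat, List.concat_eq_append, List.mem_append, List.mem_singleton] at he
  rw [SimpleGraph.edgeSet_deleteEdges]
  have hesub : e ∈ T.edgeSet := by
    rcases he with he | he
    · exact w.edges_subset_edgeSet he
    · rw [he]; exact hki
  rcases he with he | he
  · refine ⟨hesub, ?_⟩
    intro h'
    rw [Set.mem_singleton_iff] at h'
    rw [h'] at he
    exact hw (SimpleGraph.Walk.fst_mem_support_of_mem_edges w he)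
  · subst he
    refine ⟨hki, ?_⟩
    rw [Set.mem_singleton_iff]
    exact sym_ne_of hij.ne hki.ne hkj

/-- `i ∉ C_{k→i}`. -/
lemma not_reach_i (hT : T.IsTree) {k i : V} (hki : T.Adj k i) :
    ¬ (T.deleteEdges {s(k, i)}).Reachable i k :=
  fun h => tree_bridge hT hki h.symm

/-- the components `C_{k→i}` are pairwise disjoint. -/
lemma comp_disjoint (hT : T.IsTree) {i k k' v : V} (hki : T.Adj k i) (hki' : T.Adj k' i)
    (hkk' : k ≠ k') (hv : (T.deleteEdges {s(k, i)}).Reachable v k)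
    (hv' : (T.deleteEdges {s(k', i)}).Reachable v k') : False := by
  obtain ⟨p1⟩ := hv; obtain ⟨p2⟩ := hv'
  obtain ⟨w1, hw1⟩ := exists_walk_avoid hT hki p1
  obtain ⟨w2, hw2⟩ := exists_walk_avoid hT hki' p2
  refine tree_bridge hT hki ⟨((w1.reverse.append w2).concat hki').transfer _ (fun e he => ?_)⟩
  rw [SimpleGraph.edgeSet_deleteEdges]
  refine ⟨((w1.reverse.append w2).concat hki').edges_subset_edgeSet he, ?_⟩
  rw [Set.mem_singleton_iff]
  intro h'
  subst h'
  rw [SimpleGraph.Walk.edges_concat, List.concat_eq_append, List.mem_append,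
    List.mem_singleton, SimpleGraph.Walk.edges_append,
    List.mem_append, SimpleGraph.Walk.edges_reverse, List.mem_reverse] at he
  rcases he with (he | he) | he
  · exact hw1 (SimpleGraph.Walk.snd_mem_support_of_mem_edges w1 he)
  · exact hw2 (SimpleGraph.Walk.snd_mem_support_of_mem_edges w2 he)
  · rw [Sym2.eq_iff] at he
    rcases he with ⟨h1, h2⟩ | ⟨h1, h2⟩
    · exact hkk' h1
    · exact hki.ne h1

/-- every `v ∈ C_{i→j}`, `v ≠ i`, lies in `C_{k→i}` for some neighbor `k ≠ j`. -/
lemma comp_partition (hT : T.IsTree) {i j v : V} (hij : T.Adj i j)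
    (hv : (T.deleteEdges {s(i, j)}).Reachable v i) (hne : v ≠ i) :
    ∃ k, T.Adj k i ∧ k ≠ j ∧ (T.deleteEdges {s(k, i)}).Reachable v k := by
  obtain ⟨p0⟩ := hv
  have hp : p0.bypass.reverse.IsPath := p0.bypass_isPath.reverse
  cases hr : p0.bypass.reverse with
  | nil => exact absurd rfl hne.symm
  | @cons _ k _ h' q =>
    rw [hr, SimpleGraph.Walk.cons_isPath_iff] at hp
    -- h' : (T.deleteEdges {s(i,j)}).Adj i k, q : Walk k v
    obtain ⟨hTik, hsk⟩ := SimpleGraph.deleteEdges_adj.mp h'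
    have hkj : k ≠ j := by
      intro hkj; subst hkj
      exact hsk rfl
    refine ⟨k, hTik.symm, hkj, ?_⟩
    -- q.reverse : walk v → k in D, avoiding i
    have hiq : i ∉ q.reverse.support := by
      rw [SimpleGraph.Walk.support_reverse, List.mem_reverse]
      exact hp.2
    -- transfer to T
    have hTq : ∃ w : T.Walk v k, i ∉ w.support := by
      refine ⟨q.reverse.transfer T (fun e he => ?_), ?_⟩
      · have := q.reverse.edges_subset_edgeSet he
        rw [SimpleGraph.edgeSet_deleteEdges] at this
        exact this.1
      · rwa [SimpleGraph.Walk.support_transfer]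
    obtain ⟨w, hw⟩ := hTq
    exact reach_of_walk_avoid w hw

end GraphLemmas


section Decomp
variable {T : SimpleGraph V} {i j : V}

lemma mem_N_iff {k : V} : k ∈ T.neighborFinset i \ {j} ↔ T.Adj i k ∧ k ≠ j := by
  rw [Finset.mem_sdiff, SimpleGraph.mem_neighborFinset, Finset.mem_singleton]

lemma msgGraph_adj_iff (hT : T.IsTree) (hij : T.Adj i j) (a b : V) :
    (msgGraph T i j).Adj a b ↔
      (∃ k ∈ T.neighborFinset i \ {j}, s(a, b) = s(i, k)) ∨
      (∃ k ∈ T.neighborFinset i \ {j}, (msgGraph T k i).Adj a b) := by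
  constructor
  · rintro ⟨hD, hra, hrb⟩
    obtain ⟨hTab, hsab⟩ := SimpleGraph.deleteEdges_adj.mp hD
    rw [Set.mem_singleton_iff] at hsab
    by_cases hai : a = i
    · subst hai
      refine Or.inl ⟨b, mem_N_iff.mpr ⟨hTab, ?_⟩, rfl⟩
      intro hbj; subst hbj; exact hsab rfl
    · by_cases hbi : b = i
      · subst hbi
        refine Or.inl ⟨a, mem_N_iff.mpr ⟨hTab.symm, ?_⟩, Sym2.eq_swap⟩
        intro haj; subst haj
        exact hsab (Sym2.eq_swap)
      · obtain ⟨k, hki, hkj, hak⟩ := comp_partition hT hij hra hai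
        refine Or.inr ⟨k, mem_N_iff.mpr ⟨hki.symm, hkj⟩, ?_, hak, ?_⟩
        · rw [SimpleGraph.deleteEdges_adj]
          refine ⟨hTab, ?_⟩
          rw [Set.mem_singleton_iff, Sym2.eq_iff]
          rintro (⟨rfl, rfl⟩ | ⟨rfl, rfl⟩)
          · exact hbi rfl
          · exact hai rfl
        · obtain ⟨p⟩ := hak
          obtain ⟨w, hw⟩ := exists_walk_avoid hT hki p
          refine reach_of_walk_avoid (SimpleGraph.Walk.cons hTab.symm w) ?_
          rw [SimpleGraph.Walk.support_cons, List.mem_cons]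
          rintro (rfl | h)
          · exact hbi rfl
          · exact hw h
  · rintro (⟨k, hk, hab⟩ | ⟨k, hk, hD, hra, hrb⟩)
    · obtain ⟨hik, hkj⟩ := mem_N_iff.mp hk
      have hadj : (msgGraph T i j).Adj i k := by
        refine ⟨SimpleGraph.deleteEdges_adj.mpr ⟨hik, ?_⟩, SimpleGraph.Reachable.refl i,
          comp_subset hT hij hik.symm hkj (SimpleGraph.Reachable.refl k)⟩
        rw [Set.mem_singleton_iff]
        intro h
        rw [Sym2.eq_iff] at h
        rcases h with ⟨_, h2⟩ | ⟨h1, _⟩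
        · exact hkj h2
        · exact hij.ne h1
      rw [Sym2.eq_iff] at hab
      rcases hab with ⟨rfl, rfl⟩ | ⟨rfl, rfl⟩
      · exact hadj
      · exact hadj.symm
    · obtain ⟨hik, hkj⟩ := mem_N_iff.mp hk
      obtain ⟨hTab, hsab⟩ := SimpleGraph.deleteEdges_adj.mp hD
      rw [Set.mem_singleton_iff] at hsab
      refine ⟨SimpleGraph.deleteEdges_adj.mpr ⟨hTab, ?_⟩,
        comp_subset hT hij hik.symm hkj hra, comp_subset hT hij hik.symm hkj hrb⟩
      rw [Set.mem_singleton_iff]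
      intro h
      rw [Sym2.eq_iff] at h
      rcases h with ⟨rfl, rfl⟩ | ⟨rfl, rfl⟩
      · exact not_reach_i hT hik.symm hra
      · exact not_reach_i hT hik.symm hrb

lemma msg_edgeFinset_decomp (hT : T.IsTree) (hij : T.Adj i j) :
    (msgGraph T i j).edgeFinset =
      (T.neighborFinset i \ {j}).image (fun k => s(i, k)) ∪
      (T.neighborFinset i \ {j}).biUnion (fun k => (msgGraph T k i).edgeFinset) := by
  ext e
  induction e with
  | _ a b =>
    simp only [SimpleGraph.mem_edgeFinset, SimpleGraph.mem_edgeSet, Finset.mem_union,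
      Finset.mem_image, Finset.mem_biUnion, msgGraph_adj_iff hT hij a b]
    constructor
    · rintro (⟨k, hk, he⟩ | ⟨k, hk, he⟩)
      · exact Or.inl ⟨k, hk, he.symm⟩
      · exact Or.inr ⟨k, hk, he⟩
    · rintro (⟨k, hk, he⟩ | ⟨k, hk, he⟩)
      · exact Or.inl ⟨k, hk, he.symm⟩
      · exact Or.inr ⟨k, hk, he⟩

lemma adj_of_mem_msg_edge {k a b : V} (h : s(a, b) ∈ (msgGraph T k i).edgeFinset) :
    (msgGraph T k i).Adj a b := by
  rwa [SimpleGraph.mem_edgeFinset, SimpleGraph.mem_edgeSet] at h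

/-- decomposition of the edge sum -/
lemma edge_sum_decomp (hT : T.IsTree) (hij : T.Adj i j) (x : V → Bool) :
    ∑ e ∈ (msgGraph T i j).edgeFinset, edgeTerm x e
      = (∑ k ∈ T.neighborFinset i \ {j}, spin (x i) * spin (x k))
        + ∑ k ∈ T.neighborFinset i \ {j}, ∑ e ∈ (msgGraph T k i).edgeFinset, edgeTerm x e := by
  rw [msg_edgeFinset_decomp hT hij, Finset.sum_union, Finset.sum_image, Finset.sum_biUnion]
  · rfl
  · -- pairwise disjointness of the biUnion
    intro k hk k' hk' hkk'
    have hk2 : T.Adj i k ∧ k ≠ j := mem_N_iff.mp (by simpa using hk)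
    have hk2' : T.Adj i k' ∧ k' ≠ j := mem_N_iff.mp (by simpa using hk')
    rw [Function.onFun, Finset.disjoint_left]
    intro e he he'
    induction e with
    | _ a b =>
      have h1 := adj_of_mem_msg_edge he
      have h2 := adj_of_mem_msg_edge he'
      exact comp_disjoint hT hk2.1.symm hk2'.1.symm hkk' h1.2.1 h2.2.1
  · -- injectivity of k ↦ s(i,k)
    intro k hk k' hk' h
    rw [Sym2.eq_iff] at h
    rcases h with ⟨_, h2⟩ | ⟨h1, h2⟩
    · exact h2
    · exact h2.trans h1
  · -- disjointness image vs biUnion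
    rw [Finset.disjoint_left]
    rintro e he he'
    rw [Finset.mem_image] at he
    obtain ⟨k', hk', rfl⟩ := he
    rw [Finset.mem_biUnion] at he'
    obtain ⟨k, hk, hke⟩ := he'
    have := (adj_of_mem_msg_edge hke).2.1
    exact not_reach_i hT (mem_N_iff.mp hk).1.symm this

/-- decomposition of the field -/
lemma msgField_decomp (hT : T.IsTree) (hij : T.Adj i j) (B : V → ℝ) (v : V) :
    msgField T B i j v
      = (if v = i then B i else 0) + ∑ k ∈ T.neighborFinset i \ {j}, msgField T B k i v := by
  unfold msgField
  by_cases hvi : v = i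
  · subst hvi
    rw [if_pos (SimpleGraph.Reachable.refl v), if_pos rfl]
    have : ∀ k ∈ T.neighborFinset v \ {j},
        (if (T.deleteEdges {s(k, v)}).Reachable v k then B v else 0) = 0 := by
      intro k hk
      rw [if_neg (not_reach_i hT (mem_N_iff.mp hk).1.symm)]
    rw [Finset.sum_congr rfl this, Finset.sum_const_zero, add_zero]
  · rw [if_neg hvi]
    by_cases hv : (T.deleteEdges {s(i, j)}).Reachable v i
    · rw [if_pos hv]
      obtain ⟨k, hki, hkj, hvk⟩ := comp_partition hT hij hv hvi
      rw [Finset.sum_eq_single_of_mem k (mem_N_iff.mpr ⟨hki.symm, hkj⟩)]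
      · rw [if_pos hvk, zero_add]
      · intro l hl hlk
        rw [if_neg]
        intro hvl
        exact comp_disjoint hT (mem_N_iff.mp hl).1.symm hki hlk hvl hvk
    · rw [if_neg hv]
      have : ∀ k ∈ T.neighborFinset i \ {j},
          (if (T.deleteEdges {s(k, i)}).Reachable v k then B v else 0) = 0 := by
        intro k hk
        rw [if_neg]
        intro hvk
        exact hv (comp_subset hT hij (mem_N_iff.mp hk).1.symm (mem_N_iff.mp hk).2 hvk)
      rw [Finset.sum_congr rfl this, Finset.sum_const_zero, add_zero]

end Decomp

lemma hamK_dependsOn (T : SimpleGraph V) (β : ℝ) (B : V → ℝ) (k i : V) :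
    SpinDependsOn {v | (T.deleteEdges {s(k, i)}).Reachable v k}
      (ham (msgGraph T k i) β (msgField T B k i)) := by
  intro x y hxy
  unfold ham
  congr 1
  · congr 1
    refine Finset.sum_congr rfl fun e he => ?_
    induction e with
    | _ a b =>
      have h := adj_of_mem_msg_edge he
      show spin (x a) * spin (x b) = spin (y a) * spin (y b)
      rw [hxy a h.2.1, hxy b h.2.2]
  · refine Finset.sum_congr rfl fun v _ => ?_
    by_cases hv : (T.deleteEdges {s(k, i)}).Reachable v k
    · rw [hxy v hv]
    · unfold msgField
      rw [if_neg hv, zero_mul, zero_mul]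

theorem message_recursion' (T : SimpleGraph V) (hT : T.IsTree)
    (β : ℝ) (hβ : 0 ≤ β) (B : V → ℝ) (i j : V) (hij : T.Adj i j) :
    msg T β B i j =
      Real.tanh (B i + ∑ k ∈ T.neighborFinset i \ {j},
        atanh (Real.tanh β * msg T β B k i)) := by
  classical
  set N := T.neighborFinset i \ {j} with hN
  set c : ℝ := (Fintype.card (V → Bool) : ℝ) with hcdef
  have hc : 0 < c := by
    rw [hcdef]
    exact_mod_cast Fintype.card_pos
  set hamK : V → (V → Bool) → ℝ :=
    fun k x => ham (msgGraph T k i) β (msgField T B k i) x with hhamK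
  set Ck : V → Set V := fun k => {v | (T.deleteEdges {s(k, i)}).Reachable v k} with hCk
  -- Hamiltonian decomposition
  have hham : ∀ x : V → Bool, ham (msgGraph T i j) β (msgField T B i j) x
      = B i * spin (x i) + ∑ k ∈ N, (β * (spin (x i) * spin (x k)) + hamK k x) := by
    intro x
    have hK : ∀ k, hamK k x = β * ∑ e ∈ (msgGraph T k i).edgeFinset, edgeTerm x e
        + ∑ v, msgField T B k i v * spin (x v) := fun k => rfl
    rw [show ham (msgGraph T i j) β (msgField T B i j) x
        = β * ∑ e ∈ (msgGraph T i j).edgeFinset, edgeTerm x e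
          + ∑ v, msgField T B i j v * spin (x v) from rfl]
    rw [edge_sum_decomp hT hij x]
    have hfv : ∑ v, msgField T B i j v * spin (x v)
        = B i * spin (x i) + ∑ k ∈ N, ∑ v, msgField T B k i v * spin (x v) := by
      have h1 : ∀ v, msgField T B i j v * spin (x v)
          = (if v = i then B i else 0) * spin (x v)
            + ∑ k ∈ N, msgField T B k i v * spin (x v) := by
        intro v
        rw [msgField_decomp hT hij B v, add_mul, Finset.sum_mul]
      rw [Finset.sum_congr rfl fun v _ => h1 v, Finset.sum_add_distrib, Finset.sum_comm]
      congr 1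
      rw [Finset.sum_eq_single_of_mem i (Finset.mem_univ i)]
      · rw [if_pos rfl]
      · intro v _ hvi
        rw [if_neg hvi, zero_mul]
    rw [hfv]
    have hexpand : ∑ k ∈ N, (β * (spin (x i) * spin (x k)) + hamK k x)
        = ∑ k ∈ N, (β * (spin (x i) * spin (x k))
            + (β * ∑ e ∈ (msgGraph T k i).edgeFinset, edgeTerm x e
               + ∑ v, msgField T B k i v * spin (x v))) :=
      Finset.sum_congr rfl fun k _ => by rw [hK k]
    rw [hexpand]
    simp only [Finset.sum_add_distrib, ← Finset.mul_sum]
    ring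
  -- local abbreviations
  set g : Bool → V → (V → Bool) → ℝ :=
    fun b k x => Real.exp (β * (spin b * spin (x k)) + hamK k x) with hg
  set S : Bool → ℝ := fun b => ∑ x : V → Bool,
    (if x i = b then Real.exp (ham (msgGraph T i j) β (msgField T B i j) x) else 0) with hS
  set q : Bool → V → ℝ := fun b k => ∑ x : V → Bool, g b k x with hq
  set d : Bool → ℝ := fun b => ∑ x : V → Bool, (if x i = b then (1:ℝ) else 0) with hd
  set Z : V → ℝ := fun k => ∑ x : V → Bool, Real.exp (hamK k x) with hZ
  set m : V → ℝ := fun k => msg T β B k i with hm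
  set t : V → ℝ := fun k => Real.tanh β * m k with ht
  -- conditioning identity
  have key : ∀ b : Bool,
      S b * c ^ (N.card + 1) = c * (d b * Real.exp (B i * spin b)) * ∏ k ∈ N, q b k := by
    intro b
    have hdepF : SpinDependsOn {i} (fun x : V → Bool =>
        if x i = b then Real.exp (B i * spin b) else 0) := by
      intro x y hxy
      have h := hxy i rfl
      simp only [h]
    have hdepG : ∀ k ∈ N, SpinDependsOn (Ck k) (g b k) := by
      intro k hk x y hxy
      have h1 : hamK k x = hamK k y := hamK_dependsOn T β B k i x y hxy
      have h2 : x k = y k := hxy k (SimpleGraph.Reachable.refl k)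
      show Real.exp (β * (spin b * spin (x k)) + hamK k x)
          = Real.exp (β * (spin b * spin (y k)) + hamK k y)
      rw [h2, h1]
    have hdisj1 : Disjoint ({i} : Set V) (⋃ k ∈ N, Ck k) := by
      rw [Set.disjoint_left]
      rintro v rfl hv
      simp only [Set.mem_iUnion] at hv
      obtain ⟨k, hk, hik⟩ := hv
      rw [hN] at hk
      exact not_reach_i hT (mem_N_iff.mp hk).1.symm hik
    have hdisj2 : ∀ k ∈ N, ∀ l ∈ N, k ≠ l → Disjoint (Ck k) (Ck l) := by
      intro k hk l hl hkl
      rw [hN] at hk hl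
      rw [Set.disjoint_left]
      intro v hvk hvl
      exact comp_disjoint hT (mem_N_iff.mp hk).1.symm (mem_N_iff.mp hl).1.symm hkl hvk hvl
    have hdepProd : SpinDependsOn (⋃ k ∈ N, Ck k) (fun x => ∏ k ∈ N, g b k x) :=
      SpinDependsOn.prod fun k hk =>
        (hdepG k hk).mono (Set.subset_biUnion_of_mem (u := Ck) hk)
    have hpair := indep_pair hdepF hdepProd hdisj1
    have hprod := indep_prod N Ck (g b) hdepG hdisj2
    have hsum : S b = ∑ x : V → Bool,
        (if x i = b then Real.exp (B i * spin b) else 0) * ∏ k ∈ N, g b k x := by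
      rw [hS]
      refine Finset.sum_congr rfl fun x _ => ?_
      by_cases hxi : x i = b
      · rw [if_pos hxi, if_pos hxi, hham x, Real.exp_add, Real.exp_sum, hxi]
      · rw [if_neg hxi, if_neg hxi, zero_mul]
    have hF : ∑ x : V → Bool, (if x i = b then Real.exp (B i * spin b) else 0)
        = d b * Real.exp (B i * spin b) := by
      rw [hd, Finset.sum_mul]
      refine Finset.sum_congr rfl fun x _ => ?_
      by_cases hxi : x i = b
      · rw [if_pos hxi, if_pos hxi, one_mul]
      · rw [if_neg hxi, if_neg hxi, zero_mul]
    have hqdef : ∀ k, q b k = ∑ x : V → Bool, g b k x := fun k => rfl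
    calc S b * c ^ (N.card + 1)
        = c ^ N.card * (c * S b) := by ring
      _ = c ^ N.card * ((d b * Real.exp (B i * spin b)) *
            ∑ x : V → Bool, ∏ k ∈ N, g b k x) := by
          rw [hsum, hpair, hF]
      _ = (d b * Real.exp (B i * spin b)) *
            (c ^ N.card * ∑ x : V → Bool, ∏ k ∈ N, g b k x) := by ring
      _ = (d b * Real.exp (B i * spin b)) * (c * ∏ k ∈ N, ∑ x : V → Bool, g b k x) := by
          rw [hprod]
      _ = c * (d b * Real.exp (B i * spin b)) * ∏ k ∈ N, q b k := by
          rw [Finset.prod_congr rfl fun k _ => (hqdef k).symm]; ring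
  -- d facts
  have hdeq : d true = d false := by
    rw [hd]
    have einv : Function.Involutive (fun x : V → Bool => Function.update x i (!(x i))) := by
      intro x
      ext v
      rcases eq_or_ne v i with rfl | hv
      · simp [Function.update_apply]
      · simp [Function.update_apply, hv]
    refine Fintype.sum_equiv einv.toPerm _ _ fun x => ?_
    rcases hxi : x i <;>
      simp [Function.Involutive.toPerm, Function.update_apply, hxi]
  have hdpos : ∀ b, 0 < d b := by
    intro b
    rw [hd]
    refine Finset.sum_pos' (fun x _ => by positivity) ⟨fun _ => b, Finset.mem_univ _, ?_⟩
    simp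
  -- numerator/denominator split
  have hsplit1 : ∑ x : V → Bool,
      spin (x i) * Real.exp (ham (msgGraph T i j) β (msgField T B i j) x) = S true - S false := by
    rw [hS, ← Finset.sum_sub_distrib]
    refine Finset.sum_congr rfl fun x _ => ?_
    rcases hxi : x i <;> simp [hxi, spin]
  have hsplit2 : ∑ x : V → Bool,
      Real.exp (ham (msgGraph T i j) β (msgField T B i j) x) = S true + S false := by
    rw [hS, ← Finset.sum_add_distrib]
    refine Finset.sum_congr rfl fun x _ => ?_
    rcases hxi : x i <;> simp [hxi]
  -- Z positivity, m bounds, q formula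
  have hZpos : ∀ k, 0 < Z k := by
    intro k
    rw [hZ]
    exact Finset.sum_pos (fun x _ => Real.exp_pos _) ⟨fun _ => true, Finset.mem_univ _⟩
  have hmk : ∀ k, m k = (∑ x : V → Bool, spin (x k) * Real.exp (hamK k x)) / Z k :=
    fun k => rfl
  have hmle : ∀ k, |m k| ≤ 1 := by
    intro k
    rw [hmk k, abs_div, abs_of_pos (hZpos k), div_le_one (hZpos k)]
    calc |∑ x : V → Bool, spin (x k) * Real.exp (hamK k x)|
        ≤ ∑ x : V → Bool, |spin (x k) * Real.exp (hamK k x)| :=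
          Finset.abs_sum_le_sum_abs _ _
      _ = Z k := by
        rw [hZ]
        refine Finset.sum_congr rfl fun x _ => ?_
        rw [abs_mul, spin_abs, one_mul, abs_of_pos (Real.exp_pos _)]
  have htanh : |Real.tanh β| < 1 := by
    have hE := Real.exp_pos (2 * β)
    rw [tanh_eq_exp, abs_lt]
    constructor
    · rw [lt_div_iff₀ (by linarith)]
      nlinarith
    · rw [div_lt_iff₀ (by linarith)]
      nlinarith
  have htlt : ∀ k, |t k| < 1 := by
    intro k
    rw [ht, abs_mul]
    calc |Real.tanh β| * |m k| ≤ |Real.tanh β| * 1 :=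
          mul_le_mul_of_nonneg_left (hmle k) (abs_nonneg _)
      _ = |Real.tanh β| := mul_one _
      _ < 1 := htanh
  have hqf : ∀ (b : Bool), ∀ k ∈ N,
      q b k = Z k * Real.cosh β * (1 + spin b * t k) := by
    intro b k hk
    have hNum : ∑ x : V → Bool, spin (x k) * Real.exp (hamK k x) = m k * Z k := by
      rw [hmk k, div_mul_cancel₀ _ (hZpos k).ne']
    have hsinh : Real.sinh β = Real.tanh β * Real.cosh β := by
      rw [Real.tanh_eq_sinh_div_cosh, div_mul_cancel₀ _ (Real.cosh_pos β).ne']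
    calc q b k = ∑ x : V → Bool,
          (Real.cosh β + spin b * spin (x k) * Real.sinh β) * Real.exp (hamK k x) := by
          rw [hq]
          refine Finset.sum_congr rfl fun x _ => ?_
          show Real.exp (β * (spin b * spin (x k)) + hamK k x) = _
          rw [Real.exp_add, exp_beta_spin β b (x k)]
      _ = ∑ x : V → Bool, (Real.cosh β * Real.exp (hamK k x)
            + (spin b * Real.sinh β) * (spin (x k) * Real.exp (hamK k x))) :=
          Finset.sum_congr rfl fun x _ => by ring
      _ = Real.cosh β * Z k + (spin b * Real.sinh β) * (m k * Z k) := by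
          rw [Finset.sum_add_distrib, ← Finset.mul_sum, ← Finset.mul_sum, hNum, hZ]
      _ = Z k * Real.cosh β * (1 + spin b * t k) := by
          rw [hsinh, ht]; ring
  have h1t : ∀ k, 0 < 1 + t k := fun k => by have := abs_lt.mp (htlt k); linarith [this.1]
  have h1t' : ∀ k, 0 < 1 - t k := fun k => by have := abs_lt.mp (htlt k); linarith [this.2]
  -- final quantities
  set A : ℝ := Real.exp (B i) * ∏ k ∈ N, (1 + t k) with hA
  set C : ℝ := Real.exp (-B i) * ∏ k ∈ N, (1 - t k) with hC
  have hApos : 0 < A := by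
    rw [hA]; exact mul_pos (Real.exp_pos _) (Finset.prod_pos fun k _ => h1t k)
  have hCpos : 0 < C := by
    rw [hC]; exact mul_pos (Real.exp_pos _) (Finset.prod_pos fun k _ => h1t' k)
  set K : ℝ := c * (d true * ∏ k ∈ N, (Z k * Real.cosh β)) with hK
  have hKpos : 0 < K := by
    rw [hK]
    exact mul_pos hc (mul_pos (hdpos true)
      (Finset.prod_pos fun k _ => mul_pos (hZpos k) (Real.cosh_pos β)))
  have hprodsplit : ∀ b : Bool, ∏ k ∈ N, q b k
      = (∏ k ∈ N, (Z k * Real.cosh β)) * ∏ k ∈ N, (1 + spin b * t k) := by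
    intro b
    rw [← Finset.prod_mul_distrib]
    exact Finset.prod_congr rfl fun k hk => hqf b k hk
  have hSA : S true * c ^ (N.card + 1) = K * A := by
    rw [key true, hprodsplit true, hK, hA]
    have h1 : ∀ k ∈ N, (1 + spin true * t k) = 1 + t k := fun k _ => by
      rw [show spin true = 1 from rfl, one_mul]
    rw [Finset.prod_congr rfl h1, show spin true = (1:ℝ) from rfl, mul_one]
    ring
  have hSC : S false * c ^ (N.card + 1) = K * C := by
    rw [key false, hprodsplit false, hK, hC, ← hdeq]
    have h1 : ∀ k ∈ N, (1 + spin false * t k) = 1 - t k := fun k _ => by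
      rw [show spin false = (-1:ℝ) from rfl]; ring
    rw [Finset.prod_congr rfl h1, show spin false = (-1:ℝ) from rfl, mul_neg_one]
    ring
  -- LHS computation
  have hLHS : msg T β B i j = (A - C) / (A + C) := by
    have hmsg : msg T β B i j
        = (∑ x : V → Bool, spin (x i) * Real.exp (ham (msgGraph T i j) β (msgField T B i j) x))
          / (∑ x : V → Bool, Real.exp (ham (msgGraph T i j) β (msgField T B i j) x)) := rfl
    have hcpow : (0:ℝ) < c ^ (N.card + 1) := pow_pos hc _
    rw [hmsg, hsplit1, hsplit2]
    calc (S true - S false) / (S true + S false)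
        = ((S true - S false) * c ^ (N.card + 1)) / ((S true + S false) * c ^ (N.card + 1)) :=
          (mul_div_mul_right _ _ hcpow.ne').symm
      _ = (K * A - K * C) / (K * A + K * C) := by
          rw [sub_mul, add_mul, hSA, hSC]
      _ = (A - C) / (A + C) := by
          rw [← mul_sub, ← mul_add, mul_div_mul_left _ _ hKpos.ne']
  -- RHS computation
  have hRHS : Real.tanh (B i + ∑ k ∈ N, atanh (t k)) = (A - C) / (A + C) := by
    rw [tanh_eq_exp]
    have hePi : Real.exp (2 * (B i + ∑ k ∈ N, atanh (t k))) = A / C := by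
      rw [mul_add, Real.exp_add, Finset.mul_sum, Real.exp_sum]
      have h1 : ∀ k ∈ N, Real.exp (2 * atanh (t k)) = (1 + t k) / (1 - t k) :=
        fun k _ => exp_two_atanh (htlt k)
      rw [Finset.prod_congr rfl h1, hA, hC, Finset.prod_div_distrib]
      have h2 : Real.exp (2 * B i) = Real.exp (B i) / Real.exp (-B i) := by
        rw [← Real.exp_sub]; ring_nf
      rw [h2, div_mul_div_comm]
    rw [hePi, div_sub_one hCpos.ne', div_add_one hCpos.ne']
    rw [div_div_div_comm, div_self hCpos.ne', div_one]
  rw [hLHS, ← hRHS]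

/-- **Message recursion on a finite tree.**  For every ordered pair of adjacent
vertices `(i,j)` of a finite tree `T`,
`m_{i→j} = tanh(B_i + Σ_{k ∈ ∂i \ {j}} atanh(tanh β · m_{k→i}))`. -/
theorem message_recursion (T : SimpleGraph V) (hT : T.IsTree)
    (β : ℝ) (hβ : 0 ≤ β) (B : V → ℝ) (i j : V) (hij : T.Adj i j) :
    msg T β B i j =
      Real.tanh (B i + ∑ k ∈ T.neighborFinset i \ {j},
        atanh (Real.tanh β * msg T β B k i)) := by
  exact message_recursion' T hT β hβ B i j hij
end

section
/- Let T = (V,E) be a finite tree, β ≥ 0, B : V → ℝ external fields, and let ν be the Ising measure on T with parameters β, B. Then for every edge {i,j} ∈ E, ⟨x_i·x_j⟩_ν = (tanh β + m_{i→j} m_{j→i})/(1 + tanh β · m_{i→j} m_{j→i}). -/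
open Real Finset

attribute [local instance] Classical.propDecidable

variable {V : Type} [Fintype V]

section GraphLemmas

variable {V : Type} (T : SimpleGraph V) (i j : V)

lemma reach_or (hT : T.Connected) (v : V) :
    (T.deleteEdges {s(i, j)}).Reachable v i ∨ (T.deleteEdges {s(i, j)}).Reachable v j := by
  obtain ⟨w⟩ := hT v i
  induction w with
  | nil => exact Or.inl (SimpleGraph.Reachable.refl _)
  | @cons a b c hab p ih =>
    rcases ih with h | h
    · by_cases he : s(a, b) = s(c, j)
      · rw [Sym2.eq_iff] at he
        rcases he with ⟨rfl, rfl⟩ | ⟨rfl, rfl⟩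
        · exact Or.inl (SimpleGraph.Reachable.refl _)
        · exact Or.inr (SimpleGraph.Reachable.refl _)
      · refine Or.inl (SimpleGraph.Reachable.trans ⟨SimpleGraph.Walk.cons ?_ SimpleGraph.Walk.nil⟩ h)
        simp [SimpleGraph.deleteEdges_adj, hab, he]
    · by_cases he : s(a, b) = s(c, j)
      · rw [Sym2.eq_iff] at he
        rcases he with ⟨rfl, rfl⟩ | ⟨rfl, rfl⟩
        · exact Or.inl (SimpleGraph.Reachable.refl _)
        · exact Or.inr (SimpleGraph.Reachable.refl _)
      · refine Or.inr (SimpleGraph.Reachable.trans ⟨SimpleGraph.Walk.cons ?_ SimpleGraph.Walk.nil⟩ h)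
        simp [SimpleGraph.deleteEdges_adj, hab, he]

lemma bridge_not_reach (hT : T.IsTree) (hij : T.Adj i j) :
    ¬ (T.deleteEdges {s(i, j)}).Reachable i j :=
  ((SimpleGraph.isAcyclic_iff_forall_adj_isBridge.mp hT.IsAcyclic) hij)

lemma not_reach_both (hT : T.IsTree) (hij : T.Adj i j) (v : V)
    (h1 : (T.deleteEdges {s(i, j)}).Reachable v i)
    (h2 : (T.deleteEdges {s(i, j)}).Reachable v j) : False :=
  bridge_not_reach T i j hT hij (h1.symm.trans h2)

end GraphLemmas

section Factor

variable {V : Type} [Fintype V]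

lemma factor_sum (p : V → Prop) (F G : (V → Bool) → ℝ)
    (hF : ∀ x y : V → Bool, (∀ v, p v → x v = y v) → F x = F y)
    (hG : ∀ x y : V → Bool, (∀ v, ¬ p v → x v = y v) → G x = G y) :
    (∑ x : V → Bool, F x * G x) * (∑ _x : V → Bool, (1 : ℝ)) =
      (∑ x : V → Bool, F x) * (∑ x : V → Bool, G x) := by
  classical
  let e := Equiv.piEquivPiSubtypeProd p (fun _ => Bool)
  have key : ∀ H : (V → Bool) → ℝ, ∑ x : V → Bool, H x =
      ∑ y : ({v // p v} → Bool) × ({v // ¬ p v} → Bool), H (e.symm y) :=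
    fun H => (Equiv.sum_comp e.symm H).symm
  set F' : ({v // p v} → Bool) → ℝ := fun a => F (e.symm (a, fun _ => true)) with hF'
  set G' : ({v // ¬ p v} → Bool) → ℝ := fun b => G (e.symm (fun _ => true, b)) with hG'
  have hFa : ∀ a b, F (e.symm (a, b)) = F' a := by
    intro a b
    apply hF
    intro v hv
    simp [e, Equiv.piEquivPiSubtypeProd, hv]
  have hGb : ∀ a b, G (e.symm (a, b)) = G' b := by
    intro a b
    apply hG
    intro v hv
    simp [e, Equiv.piEquivPiSubtypeProd, hv]
  rw [key (fun x => F x * G x), key F, key G, key (fun _ => (1:ℝ))]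
  rw [Fintype.sum_prod_type, Fintype.sum_prod_type, Fintype.sum_prod_type,
    Fintype.sum_prod_type]
  simp only [hFa, hGb]
  have h1 : (∑ a : {v // p v} → Bool, ∑ b : {v // ¬ p v} → Bool, F' a * G' b)
      = (∑ a : {v // p v} → Bool, F' a) * (∑ b : {v // ¬ p v} → Bool, G' b) :=
    (Finset.sum_mul_sum _ _ _ _).symm
  rw [h1]
  simp only [Finset.sum_const, Finset.card_univ, nsmul_eq_mul]
  rw [← Finset.mul_sum]
  ring

end Factor

section Ham

variable {V : Type} [Fintype V]

lemma edgeTerm_mk (x : V → Bool) (a b : V) :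
    edgeTerm x s(a, b) = spin (x a) * spin (x b) := rfl

lemma ham_depends (H : SimpleGraph V) (β : ℝ) (C : V → ℝ) (p : V → Prop)
    (hE : ∀ a b, H.Adj a b → p a ∧ p b) (hC : ∀ v, ¬ p v → C v = 0)
    {x y : V → Bool} (h : ∀ v, p v → x v = y v) : ham H β C x = ham H β C y := by
  unfold ham
  congr 1
  · congr 1
    apply Finset.sum_congr rfl
    intro e he
    induction e using Sym2.ind with
    | _ a b =>
      rw [SimpleGraph.mem_edgeFinset, SimpleGraph.mem_edgeSet] at he
      obtain ⟨hpa, hpb⟩ := hE a b he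
      rw [edgeTerm_mk, edgeTerm_mk, h a hpa, h b hpb]
  · apply Finset.sum_congr rfl
    intro v _
    by_cases hv : p v
    · rw [h v hv]
    · rw [hC v hv]; ring

lemma deleteEdges_swap (T : SimpleGraph V) (i j : V) :
    T.deleteEdges {s(j, i)} = T.deleteEdges {s(i, j)} := by
  rw [Sym2.eq_swap]

lemma msgField_swap (T : SimpleGraph V) (B : V → ℝ) (i j : V) :
    msgField T B j i = fun v => if (T.deleteEdges {s(i, j)}).Reachable v j then B v else 0 := by
  unfold msgField
  have hsw := deleteEdges_swap T i j
  simp only [hsw]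

lemma ham_split (T : SimpleGraph V) (hT : T.IsTree) (i j : V) (hij : T.Adj i j)
    (β : ℝ) (B : V → ℝ) (x : V → Bool) :
    ham T β B x = β * edgeTerm x s(i, j) + ham (msgGraph T i j) β (msgField T B i j) x
      + ham (msgGraph T j i) β (msgField T B j i) x := by
  classical
  set D := T.deleteEdges {s(i, j)} with hD
  have hmemT : s(i, j) ∈ T.edgeFinset := by
    rw [SimpleGraph.mem_edgeFinset, SimpleGraph.mem_edgeSet]; exact hij
  have hDel : D.edgeFinset = T.edgeFinset.erase s(i, j) := by
    ext e
    simp only [SimpleGraph.mem_edgeFinset, hD, SimpleGraph.edgeSet_deleteEdges,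
      Set.mem_diff, Set.mem_singleton_iff, Finset.mem_erase, SimpleGraph.mem_edgeFinset]
    tauto
  have hGBadj : ∀ a b : V, (msgGraph T j i).Adj a b ↔
      D.Adj a b ∧ D.Reachable a j ∧ D.Reachable b j := by
    intro a b
    show (T.deleteEdges {s(j, i)}).Adj a b ∧ _ ∧ _ ↔ _
    rw [deleteEdges_swap]
  have hUnion : D.edgeFinset = (msgGraph T i j).edgeFinset ∪ (msgGraph T j i).edgeFinset := by
    ext e
    induction e using Sym2.ind with
    | _ a b =>
      simp only [Finset.mem_union, SimpleGraph.mem_edgeFinset, SimpleGraph.mem_edgeSet, hGBadj]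
      constructor
      · intro hab
        have hr : D.Reachable a b := SimpleGraph.Adj.reachable hab
        rcases reach_or T i j hT.isConnected a with h | h
        · exact Or.inl ⟨hab, h, hr.symm.trans h⟩
        · exact Or.inr ⟨hab, h, hr.symm.trans h⟩
      · rintro (⟨hab, -, -⟩ | ⟨hab, -, -⟩) <;> exact hab
  have hDisj : Disjoint (msgGraph T i j).edgeFinset (msgGraph T j i).edgeFinset := by
    rw [Finset.disjoint_left]
    intro e h1 h2
    induction e using Sym2.ind with
    | _ a b =>
      rw [SimpleGraph.mem_edgeFinset, SimpleGraph.mem_edgeSet] at h1 h2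
      rw [hGBadj] at h2
      exact not_reach_both T i j hT hij a h1.2.1 h2.2.1
  have hedge : ∑ e ∈ T.edgeFinset, edgeTerm x e = edgeTerm x s(i, j)
      + (∑ e ∈ (msgGraph T i j).edgeFinset, edgeTerm x e
        + ∑ e ∈ (msgGraph T j i).edgeFinset, edgeTerm x e) := by
    rw [← Finset.sum_union hDisj, ← hUnion, hDel, Finset.add_sum_erase _ _ hmemT]
  have hfield : ∀ v : V, B v = msgField T B i j v + msgField T B j i v := by
    intro v
    rw [msgField_swap T B i j]
    unfold msgField
    rcases reach_or T i j hT.isConnected v with h | h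
    · have h2 : ¬ D.Reachable v j := fun hh => not_reach_both T i j hT hij v h hh
      simp [h]; exact fun hh => absurd hh h2
    · have h2 : ¬ D.Reachable v i := fun hh => not_reach_both T i j hT hij v hh h
      simp [h]; exact fun hh => absurd hh h2
  unfold ham
  rw [hedge]
  have : ∑ v : V, B v * spin (x v) = ∑ v : V, msgField T B i j v * spin (x v)
      + ∑ v : V, msgField T B j i v * spin (x v) := by
    rw [← Finset.sum_add_distrib]
    apply Finset.sum_congr rfl
    intro v _
    rw [← add_mul, ← hfield]
  rw [this]
  ring

end Ham

set_option maxHeartbeats 1000000 in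
/-- **Edge correlation via messages.**  For a finite tree `T`, `β ≥ 0`, fields `B`,
and the Ising measure `ν` on `T`, every edge `{i,j}` satisfies
`⟨x_i x_j⟩_ν = (tanh β + m_{i→j} m_{j→i}) / (1 + tanh β · m_{i→j} m_{j→i})`. -/
theorem edge_correlation_via_messages (T : SimpleGraph V) (hT : T.IsTree)
    (β : ℝ) (hβ : 0 ≤ β) (B : V → ℝ) (i j : V) (hij : T.Adj i j) :
    isingExp T β B (fun x => spin (x i) * spin (x j)) =
      (Real.tanh β + msg T β B i j * msg T β B j i) /
        (1 + Real.tanh β * (msg T β B i j * msg T β B j i)) := by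
  classical
  set D := T.deleteEdges {s(i, j)} with hD
  set GA := msgGraph T i j with hGA
  set GB := msgGraph T j i with hGB
  set BA := msgField T B i j with hBA
  set BB := msgField T B j i with hBB
  set p : V → Prop := fun v => D.Reachable v i with hp
  -- basic reachability facts
  have hpi : p i := SimpleGraph.Reachable.refl _
  have hnpj : ¬ p j := fun h => bridge_not_reach T i j hT hij h.symm
  have hq_np : ∀ v, D.Reachable v j → ¬ p v := fun v h hp' => not_reach_both T i j hT hij v hp' h
  have hnp_q : ∀ v, ¬ p v → D.Reachable v j := by
    intro v hv
    rcases reach_or T i j hT.isConnected v with h | h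
    · exact absurd h hv
    · exact h
  have hGBadj : ∀ a b : V, GB.Adj a b ↔ D.Adj a b ∧ D.Reachable a j ∧ D.Reachable b j := by
    intro a b
    rw [hGB]
    show (T.deleteEdges {s(j, i)}).Adj a b ∧ _ ∧ _ ↔ _
    rw [deleteEdges_swap]
  -- dependence of the two halves of the Hamiltonian
  have hBA0 : ∀ v, ¬ p v → BA v = 0 := by
    intro v hv; rw [hBA]; unfold msgField; exact if_neg hv
  have hBB0 : ∀ v, ¬ ¬ p v → BB v = 0 := by
    intro v hv
    rw [hBB, msgField_swap T B i j]
    exact if_neg (fun h => (hv (hq_np v h)))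
  have hamA_dep : ∀ x y : V → Bool, (∀ v, p v → x v = y v) →
      ham GA β BA x = ham GA β BA y := by
    intro x y h
    refine ham_depends GA β BA p (fun a b hab => ⟨hab.2.1, hab.2.2⟩) hBA0 h
  have hamB_dep : ∀ x y : V → Bool, (∀ v, ¬ p v → x v = y v) →
      ham GB β BB x = ham GB β BB y := by
    intro x y h
    refine ham_depends GB β BB (fun v => ¬ p v)
      (fun a b hab => ?_) hBB0 h
    rw [hGBadj] at hab
    exact ⟨hq_np a hab.2.1, hq_np b hab.2.2⟩
  -- the four partial partition functions
  set aa : Bool → ℝ := fun s => ∑ x : V → Bool,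
    (if x i = s then (1:ℝ) else 0) * Real.exp (ham GA β BA x) with haa
  set bb : Bool → ℝ := fun t => ∑ x : V → Bool,
    (if x j = t then (1:ℝ) else 0) * Real.exp (ham GB β BB x) with hbb
  set K : ℝ := ∑ _x : V → Bool, (1:ℝ) with hKdef
  have hK : 0 < K := by
    rw [hKdef]
    simp [Finset.sum_const, Finset.card_univ]
  have haapos : ∀ s, 0 < aa s := by
    intro s
    rw [haa]
    apply Finset.sum_pos'
    · intro x _
      have := Real.exp_pos (ham GA β BA x)
      by_cases h : x i = s <;> simp [h] <;> positivity
    · exact ⟨fun _ => s, Finset.mem_univ _, by simp [Real.exp_pos]⟩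
  have hbbpos : ∀ t, 0 < bb t := by
    intro t
    rw [hbb]
    apply Finset.sum_pos'
    · intro x _
      have := Real.exp_pos (ham GB β BB x)
      by_cases h : x j = t <;> simp [h] <;> positivity
    · exact ⟨fun _ => t, Finset.mem_univ _, by simp [Real.exp_pos]⟩
  -- messages in terms of the partial partition functions
  have hmsg_i : msg T β B i j = (aa true - aa false) / (aa true + aa false) := by
    have : msg T β B i j = isingExp GA β BA (fun x => spin (x i)) := by
      rw [hGA, hBA]; rfl
    rw [this]
    unfold isingExp
    congr 1
    · rw [haa, ← Finset.sum_sub_distrib]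
      apply Finset.sum_congr rfl
      intro x _
      cases hxi : x i <;> simp [spin, hxi]
    · rw [haa, ← Finset.sum_add_distrib]
      apply Finset.sum_congr rfl
      intro x _
      cases hxi : x i <;> simp [spin, hxi]
  have hmsg_j : msg T β B j i = (bb true - bb false) / (bb true + bb false) := by
    have : msg T β B j i = isingExp GB β BB (fun x => spin (x j)) := by
      rw [hGB, hBB]; rfl
    rw [this]
    unfold isingExp
    congr 1
    · rw [hbb, ← Finset.sum_sub_distrib]
      apply Finset.sum_congr rfl
      intro x _
      cases hxj : x j <;> simp [spin, hxj]
    · rw [hbb, ← Finset.sum_add_distrib]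
      apply Finset.sum_congr rfl
      intro x _
      cases hxj : x j <;> simp [spin, hxj]
  -- factorization
  have hfac : ∀ s t : Bool,
      (∑ x : V → Bool, ((if x i = s then (1:ℝ) else 0) * Real.exp (ham GA β BA x)) *
        ((if x j = t then (1:ℝ) else 0) * Real.exp (ham GB β BB x))) * K = aa s * bb t := by
    intro s t
    refine factor_sum p _ _ ?_ ?_
    · intro x y h
      rw [h i hpi, hamA_dep x y h]
    · intro x y h
      rw [h j hnpj, hamB_dep x y h]
  have hmain : ∀ w : Bool → Bool → ℝ,
      (∑ x : V → Bool, w (x i) (x j) * (Real.exp (ham GA β BA x) * Real.exp (ham GB β BB x))) * K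
        = ∑ s : Bool, ∑ t : Bool, w s t * (aa s * bb t) := by
    intro w
    have step1 : ∀ x : V → Bool,
        w (x i) (x j) * (Real.exp (ham GA β BA x) * Real.exp (ham GB β BB x))
        = ∑ s : Bool, ∑ t : Bool, w s t *
            (((if x i = s then (1:ℝ) else 0) * Real.exp (ham GA β BA x)) *
              ((if x j = t then (1:ℝ) else 0) * Real.exp (ham GB β BB x))) := by
      intro x
      rw [Fintype.sum_bool, Fintype.sum_bool, Fintype.sum_bool]
      cases hxi : x i <;> cases hxj : x j <;> simp [hxi, hxj] <;> ring
    simp_rw [step1]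
    rw [Finset.sum_comm]
    rw [Finset.sum_mul]
    apply Finset.sum_congr rfl
    intro s _
    rw [Finset.sum_comm, Finset.sum_mul]
    apply Finset.sum_congr rfl
    intro t _
    rw [← hfac s t, ← Finset.mul_sum, mul_assoc]
  -- split the Hamiltonian
  have hsplit' : ∀ x : V → Bool, ham T β B x
      = β * (spin (x i) * spin (x j)) + ham GA β BA x + ham GB β BB x := by
    intro x
    rw [hGA, hBA, hGB, hBB]
    rw [ham_split T hT i j hij β B x, edgeTerm_mk]
  set P : ℝ := aa true * bb true + aa false * bb false with hPdef
  set Q : ℝ := aa true * bb false + aa false * bb true with hQdef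
  have hNum : (∑ x : V → Bool, (spin (x i) * spin (x j)) * Real.exp (ham T β B x)) * K
      = Real.exp β * P - Real.exp (-β) * Q := by
    have h2 : (∑ x : V → Bool, (spin (x i) * spin (x j)) * Real.exp (ham T β B x))
        = ∑ x : V → Bool, (fun s t => spin s * spin t * Real.exp (β * (spin s * spin t)))
            (x i) (x j) * (Real.exp (ham GA β BA x) * Real.exp (ham GB β BB x)) := by
      apply Finset.sum_congr rfl
      intro x _
      rw [hsplit' x, Real.exp_add, Real.exp_add]
      ring
    rw [h2, hmain (fun s t => spin s * spin t * Real.exp (β * (spin s * spin t))),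
      Fintype.sum_bool, Fintype.sum_bool, Fintype.sum_bool]
    rw [hPdef, hQdef]
    norm_num [spin]
    ring
  have hDen : (∑ x : V → Bool, Real.exp (ham T β B x)) * K
      = Real.exp β * P + Real.exp (-β) * Q := by
    have h2 : (∑ x : V → Bool, Real.exp (ham T β B x))
        = ∑ x : V → Bool, (fun s t => Real.exp (β * (spin s * spin t)))
            (x i) (x j) * (Real.exp (ham GA β BA x) * Real.exp (ham GB β BB x)) := by
      apply Finset.sum_congr rfl
      intro x _
      rw [hsplit' x, Real.exp_add, Real.exp_add]
      ring
    rw [h2, hmain (fun s t => Real.exp (β * (spin s * spin t))),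
      Fintype.sum_bool, Fintype.sum_bool, Fintype.sum_bool]
    rw [hPdef, hQdef]
    norm_num [spin]
    ring
  have hPpos : 0 < P := by rw [hPdef]; have := haapos true; have := haapos false;
                           have := hbbpos true; have := hbbpos false; positivity
  have hQpos : 0 < Q := by rw [hQdef]; have := haapos true; have := haapos false;
                           have := hbbpos true; have := hbbpos false; positivity
  have hDKpos : 0 < Real.exp β * P + Real.exp (-β) * Q := by positivity
  have hLHS : isingExp T β B (fun x => spin (x i) * spin (x j))
      = (Real.exp β * P - Real.exp (-β) * Q) / (Real.exp β * P + Real.exp (-β) * Q) := by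
    unfold isingExp
    rw [← mul_div_mul_right _ _ hK.ne', hNum, hDen]
  rw [hLHS, hmsg_i, hmsg_j, Real.tanh_eq_sinh_div_cosh]
  have h1 : (0:ℝ) < aa true + aa false := by have := haapos true; have := haapos false; positivity
  have h2 : (0:ℝ) < bb true + bb false := by have := hbbpos true; have := hbbpos false; positivity
  have hcosh := Real.cosh_pos β
  have hEE : (0:ℝ) < Real.exp β + Real.exp (-β) := by positivity
  have key2 : 1 + Real.sinh β / Real.cosh β *
        ((aa true - aa false) / (aa true + aa false) * ((bb true - bb false) / (bb true + bb false)))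
      = (Real.exp β * P + Real.exp (-β) * Q)
        / (Real.cosh β * ((aa true + aa false) * (bb true + bb false))) := by
    rw [hPdef, hQdef, Real.sinh_eq, Real.cosh_eq]
    field_simp
    ring
  have hden2 : (0:ℝ) < 1 + Real.sinh β / Real.cosh β *
      ((aa true - aa false) / (aa true + aa false) * ((bb true - bb false) / (bb true + bb false))) := by
    rw [key2]
    exact div_pos hDKpos (mul_pos (Real.cosh_pos β) (mul_pos h1 h2))
  rw [div_eq_div_iff hDKpos.ne' hden2.ne']
  rw [hPdef, hQdef, Real.sinh_eq, Real.cosh_eq]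
  field_simp
  ring
end

section
/- Let T = (V,E) be a finite tree, β ≥ 0, B : V → ℝ external fields, and let ν be the Ising measure on T with parameters β, B. Let U' ⊆ V be such that the induced subgraph T[U'] is connected, set W = V \ U', and let ∂_*U' be the set of vertices of U' having a neighbor in W. For u ∈ ∂_*U', let T_u be the connected component of u in the subgraph of T induced by W ∪ {u}, and let ⟨x_u⟩_W denote the expectation of x_u under the Ising measure on T_u with parameters β and B restricted to T_u. Then the marginal of ν on {−1,+1}^{U'} is the Ising measure on the induced subgraph T[U'] with inverse temperature β and external fields B'_u = atanh(⟨x_u⟩_W) for u ∈ ∂_*U' and B'_u = B_u for u ∈ U' \ ∂_*U'. -/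
open Real Finset

attribute [local instance] Classical.propDecidable

variable {V : Type} [Fintype V]

/-- the `ν^{β,B}_G`-probability that a configuration agrees with `x` on the set `S`. -/
noncomputable def isingProbAgree (G : SimpleGraph V) (β : ℝ) (B : V → ℝ)
    (S : Set V) (x : V → Bool) : ℝ :=
  (∑ z : V → Bool, (if ∀ u ∈ S, z u = x u then Real.exp (ham G β B z) else 0)) /
    (∑ z : V → Bool, Real.exp (ham G β B z))

/-- the subgraph of `T` induced by the vertex set `S`, kept as a graph on the
ambient vertex set (vertices outside `S` are isolated). -/
def onSet (T : SimpleGraph V) (S : Set V) : SimpleGraph V where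
  Adj a b := T.Adj a b ∧ a ∈ S ∧ b ∈ S
  symm := ⟨fun a b ⟨h, ha, hb⟩ => ⟨h.symm, hb, ha⟩⟩
  loopless := ⟨fun a h => T.loopless.irrefl a h.1⟩

/-- the connected component of `u` in `G`, as a graph on the ambient vertex set. -/
def compAt (G : SimpleGraph V) (u : V) : SimpleGraph V where
  Adj a b := G.Adj a b ∧ G.Reachable a u ∧ G.Reachable b u
  symm := ⟨fun a b ⟨h, ha, hb⟩ => ⟨h.symm, hb, ha⟩⟩
  loopless := ⟨fun a h => G.loopless.irrefl a h.1⟩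

/-- `⟨x_u⟩_W` : the magnetization at `u` for the Ising measure on `T_u`, the
connected component of `u` in the subgraph of `T` induced by `W ∪ {u}` (where
`W = V \ U'`), with inverse temperature `β` and fields `B` restricted to `T_u`. -/
noncomputable def bdryMag (T : SimpleGraph V) (β : ℝ) (B : V → ℝ)
    (U' : Set V) (u : V) : ℝ :=
  isingExp (compAt (onSet T (U'ᶜ ∪ {u})) u) β
    (fun v => if (onSet T (U'ᶜ ∪ {u})).Reachable v u then B v else 0)
    (fun x => spin (x u))

namespace TM

/-! ### generic sum machinery -/

lemma edgeTerm_mk {V : Type} (z : V → Bool) (a b : V) :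
    edgeTerm z s(a, b) = spin (z a) * spin (z b) := rfl

lemma edgeTerm_congr {V : Type} {z z' : V → Bool} {e : Sym2 V}
    (h : ∀ v ∈ e, z v = z' v) : edgeTerm z e = edgeTerm z' e := by
  induction e with
  | _ a b =>
    rw [edgeTerm_mk, edgeTerm_mk, h a (by simp), h b (by simp)]

/-- `f` depends only on coordinates in `S`. -/
def DepOn (f : (V → Bool) → ℝ) (S : Set V) : Prop :=
  ∀ ⦃z z' : V → Bool⦄, (∀ v ∈ S, z v = z' v) → f z = f z'

lemma DepOn.mono {f : (V → Bool) → ℝ} {S S' : Set V} (h : DepOn f S) (hss : S ⊆ S') :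
    DepOn f S' := fun _ _ hz => h (fun v hv => hz v (hss hv))

/-- the merging involution used to split sums. -/
noncomputable def mergeEquiv (S : Set V) : ((V → Bool) × (V → Bool)) ≃ ((V → Bool) × (V → Bool)) where
  toFun p := (fun v => if v ∈ S then p.1 v else p.2 v, fun v => if v ∈ S then p.2 v else p.1 v)
  invFun p := (fun v => if v ∈ S then p.1 v else p.2 v, fun v => if v ∈ S then p.2 v else p.1 v)
  left_inv p := by
    ext v <;> by_cases hv : v ∈ S <;> simp [hv]
  right_inv p := by
    ext v <;> by_cases hv : v ∈ S <;> simp [hv]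

lemma sum_mul_split {g h : (V → Bool) → ℝ} {S : Set V}
    (hg : DepOn g S) (hh : DepOn h Sᶜ) :
    (∑ z : V → Bool, g z) * (∑ z : V → Bool, h z)
      = (∑ z : V → Bool, g z * h z) * 2 ^ Fintype.card V := by
  classical
  have key : ∀ p : (V → Bool) × (V → Bool),
      g p.1 * h p.2 = g ((mergeEquiv S p).1) * h ((mergeEquiv S p).1) := by
    intro p
    have h1 : g p.1 = g ((mergeEquiv S p).1) := by
      apply hg; intro v hv; simp [mergeEquiv, hv]
    have h2 : h p.2 = h ((mergeEquiv S p).1) := by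
      apply hh; intro v hv; simp [mergeEquiv, (by simpa using hv : ¬ v ∈ S)]
    rw [← h1, ← h2]
  calc (∑ z : V → Bool, g z) * (∑ z : V → Bool, h z)
      = ∑ p : (V → Bool) × (V → Bool), g p.1 * h p.2 := by
        rw [Fintype.sum_prod_type]
        exact (Finset.sum_mul_sum _ _ _ _)
    _ = ∑ p : (V → Bool) × (V → Bool), g ((mergeEquiv S p).1) * h ((mergeEquiv S p).1) :=
        Finset.sum_congr rfl (fun p _ => key p)
    _ = ∑ p : (V → Bool) × (V → Bool), g p.1 * h p.1 :=
        Equiv.sum_comp (mergeEquiv S) (fun p => g p.1 * h p.1)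
    _ = ∑ z : V → Bool, ∑ _z' : V → Bool, g z * h z :=
        Fintype.sum_prod_type (fun p => g p.1 * h p.1)
    _ = (∑ z : V → Bool, g z * h z) * 2 ^ Fintype.card V := by
        simp only [Finset.sum_const, Finset.card_univ, Fintype.card_fun, Fintype.card_bool,
          nsmul_eq_mul, ← Finset.sum_mul]
        rw [Finset.sum_mul]
        exact Finset.sum_congr rfl (fun z _ => by push_cast; ring)

lemma DepOn.prod {ι : Type*} (s : Finset ι) (S : ι → Set V) (f : ι → (V → Bool) → ℝ)
    (hdep : ∀ i ∈ s, DepOn (f i) (S i)) {A : Set V} (hsub : ∀ i ∈ s, S i ⊆ A) :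
    DepOn (fun z => ∏ i ∈ s, f i z) A := by
  intro z z' hz
  exact Finset.prod_congr rfl fun i hi =>
    hdep i hi (fun v hv => hz v (hsub i hi hv))

lemma sum_prod_split {ι : Type*} (s : Finset ι) (S : ι → Set V) (f : ι → (V → Bool) → ℝ)
    (hdep : ∀ i ∈ s, DepOn (f i) (S i))
    (hdisj : ∀ i ∈ s, ∀ j ∈ s, i ≠ j → Disjoint (S i) (S j)) :
    (∑ z : V → Bool, ∏ i ∈ s, f i z) * ((2 : ℝ) ^ Fintype.card V) ^ s.card
      = 2 ^ Fintype.card V * ∏ i ∈ s, (∑ z : V → Bool, f i z) := by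
  classical
  induction s using Finset.induction with
  | empty => simp
  | @insert i s hnotmem ih =>
    have hgi : DepOn (f i) (S i) := hdep i (Finset.mem_insert_self i s)
    have hrest : DepOn (fun z => ∏ j ∈ s, f j z) ((S i)ᶜ) := by
      apply DepOn.prod s S f (fun j hj => hdep j (Finset.mem_insert_of_mem hj))
      intro j hj
      have := hdisj i (Finset.mem_insert_self i s) j (Finset.mem_insert_of_mem hj)
        (fun he => hnotmem (he ▸ hj))
      exact (Set.disjoint_left.mp this.symm : ∀ ⦃a⦄, a ∈ S j → a ∉ S i)
    have key := sum_mul_split hgi hrest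
    have ihh := ih (fun j hj => hdep j (Finset.mem_insert_of_mem hj))
      (fun a ha b hb hab => hdisj a (Finset.mem_insert_of_mem ha) b
        (Finset.mem_insert_of_mem hb) hab)
    rw [Finset.card_insert_of_notMem hnotmem, Finset.prod_insert hnotmem, pow_succ]
    calc (∑ z : V → Bool, ∏ j ∈ insert i s, f j z) *
          (((2:ℝ) ^ Fintype.card V) ^ s.card * (2:ℝ) ^ Fintype.card V)
        = ((∑ z : V → Bool, f i z * ∏ j ∈ s, f j z) * (2:ℝ) ^ Fintype.card V) *
            ((2:ℝ) ^ Fintype.card V) ^ s.card := by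
          simp_rw [Finset.prod_insert hnotmem]; ring
      _ = (∑ z : V → Bool, f i z) * ((∑ z : V → Bool, ∏ j ∈ s, f j z) *
            ((2:ℝ) ^ Fintype.card V) ^ s.card) := by rw [← key]; ring
      _ = (∑ z : V → Bool, f i z) * ((2:ℝ) ^ Fintype.card V * ∏ j ∈ s, ∑ z : V → Bool, f j z) := by
          rw [ihh]
      _ = 2 ^ Fintype.card V * ((∑ z : V → Bool, f i z) * ∏ j ∈ s, ∑ z : V → Bool, f j z) := by
          ring

/-- the spin-flip at `u` as an equivalence. -/
noncomputable def flipEquiv (u : V) : (V → Bool) ≃ (V → Bool) :=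
  Function.Involutive.toPerm (fun z => Function.update z u (!(z u))) (by
    intro z
    funext v
    by_cases hv : v = u
    · subst hv; simp
    · simp [Function.update_of_ne hv])

lemma sum_update (u : V) (c : Bool) (G : (V → Bool) → ℝ) :
    ∑ z : V → Bool, G (Function.update z u c)
      = 2 * ∑ z : V → Bool, (if z u = c then G z else 0) := by
  classical
  have split : ∀ z : V → Bool, G (Function.update z u c)
      = (if z u = c then G z else 0) + (if z u = c then 0 else G (Function.update z u c)) := by
    intro z
    by_cases h : z u = c
    · rw [if_pos h, if_pos h, ← h, Function.update_eq_self, add_zero]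
    · rw [if_neg h, if_neg h, zero_add]
  rw [Finset.sum_congr rfl (fun z _ => split z), Finset.sum_add_distrib]
  have reflip : ∑ z : V → Bool, (if z u = c then 0 else G (Function.update z u c))
      = ∑ z : V → Bool, (if z u = c then G z else 0) := by
    rw [← Equiv.sum_comp (flipEquiv u)
      (fun z => if z u = c then (0:ℝ) else G (Function.update z u c))]
    apply Finset.sum_congr rfl
    intro z _
    have hval : (flipEquiv u) z = Function.update z u (!(z u)) := rfl
    rw [hval]
    by_cases h : z u = c
    · have h1 : (Function.update z u (!(z u))) u = !(z u) := by simp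
      have h2 : ¬ ((Function.update z u (!(z u))) u = c) := by
        rw [h1, h]; cases c <;> simp
      rw [if_neg h2, if_pos h]
      have : Function.update (Function.update z u (!(z u))) u c = z := by
        funext v
        by_cases hv : v = u
        · subst hv; simp [h]
        · simp [Function.update_of_ne hv]
      rw [this]
    · have h1 : (Function.update z u (!(z u))) u = !(z u) := by simp
      have h2 : (Function.update z u (!(z u))) u = c := by
        rw [h1]; cases c <;> cases hzu : z u <;> simp_all
      rw [if_pos h2, if_neg h]
  rw [reflip, two_mul]

/-! ### algebra for atanh -/

lemma atanh_ratio {a b : ℝ} (ha : 0 < a) (hb : 0 < b) :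
    atanh ((a - b) / (a + b)) = (1 / 2) * Real.log (a / b) := by
  have hab : a + b ≠ 0 := by positivity
  have h1 : 1 + (a - b) / (a + b) = 2 * a / (a + b) := by field_simp; ring
  have h2 : 1 - (a - b) / (a + b) = 2 * b / (a + b) := by field_simp; ring
  have h3 : (2 * a / (a + b)) / (2 * b / (a + b)) = a / b := by
    field_simp
  rw [atanh, h1, h2, h3]

lemma sqrt_mul_exp_atanh {a b : ℝ} (ha : 0 < a) (hb : 0 < b) (c : Bool) :
    Real.sqrt (a * b) * Real.exp (atanh ((a - b) / (a + b)) * spin c)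
      = if c then a else b := by
  have key : ∀ x y : ℝ, 0 < x → 0 < y →
      Real.sqrt (x * y) * Real.exp ((1 / 2) * Real.log (x / y)) = x := by
    intro x y hx hy
    have hxy : (0:ℝ) < x / y := by positivity
    have : Real.exp ((1 / 2) * Real.log (x / y)) = Real.sqrt (x / y) := by
      rw [Real.sqrt_eq_rpow, Real.rpow_def_of_pos hxy, mul_comm, one_div]
    rw [this, ← Real.sqrt_mul (by positivity)]
    have : x * y * (x / y) = x ^ 2 := by field_simp
    rw [this, Real.sqrt_sq hx.le]
  rw [atanh_ratio ha hb]
  cases c with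
  | true =>
    have : spin true = 1 := rfl
    rw [this, mul_one, if_pos rfl]
    exact key a b ha hb
  | false =>
    have hs : spin false = -1 := rfl
    have hlog : (1 / 2) * Real.log (a / b) * (-1) = (1 / 2) * Real.log (b / a) := by
      rw [Real.log_div ha.ne' hb.ne', Real.log_div hb.ne' ha.ne']; ring
    rw [hs, hlog, if_neg (by simp), mul_comm a b]
    exact key b a hb ha

/-! ### graph structure lemmas -/

section Graph

variable (T : SimpleGraph V) (U' : Set V)

/-- the graph `T` induced on `W ∪ {u}`. -/
abbrev GU (u : V) : SimpleGraph V := onSet T (U'ᶜ ∪ {u})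

lemma gu_adj {u a b : V} :
    (GU T U' u).Adj a b ↔ T.Adj a b ∧ (a ∉ U' ∨ a = u) ∧ (b ∉ U' ∨ b = u) := by
  simp [GU, onSet, Set.mem_union, Set.mem_compl_iff, Set.mem_singleton_iff]
  tauto

lemma gu_le (u : V) : GU T U' u ≤ T := fun _a _b h => h.1

lemma walk_support_onSet {S : Set V} :
    ∀ {a b : V} (p : (onSet T S).Walk a b), ∀ v ∈ p.support, v = a ∨ v ∈ S := by
  intro a b p
  induction p with
  | nil => intro v hv; left; simpa using hv
  | cons h q ih =>
    intro v hv
    rw [SimpleGraph.Walk.support_cons, List.mem_cons] at hv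
    rcases hv with hv | hv
    · exact Or.inl hv
    · rcases ih v hv with rfl | hv
      · exact Or.inr h.2.2
      · exact Or.inr hv

lemma reach_mem {u v : V} (hu : u ∈ U') (h : (GU T U' u).Reachable v u) :
    v = u ∨ v ∉ U' := by
  by_cases hvu : v = u
  · exact Or.inl hvu
  · obtain ⟨p⟩ := h
    cases p with
    | nil => exact absurd rfl hvu
    | cons hadj q =>
      right
      rcases (gu_adj T U').mp hadj with ⟨_, ha, _⟩
      rcases ha with ha | ha
      · exact ha
      · exact absurd ha hvu

lemma reach_bdry {u w : V} (hu : u ∈ U') (hw : w ∉ U')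
    (h : (GU T U' u).Reachable w u) : ∃ w', w' ∉ U' ∧ T.Adj u w' := by
  obtain ⟨p⟩ := h.symm
  cases p with
  | nil =>
    exact absurd hu (by simpa using hw)
  | @cons _ c _ hadj q =>
    rcases (gu_adj T U').mp hadj with ⟨hTadj, _, hc⟩
    refine ⟨c, ?_, hTadj⟩
    rcases hc with hc | hc
    · exact hc
    · exact absurd (hc ▸ hu) (by subst hc; exact fun h' => hTadj.ne' rfl)

lemma exists_attach_of_walk :
    ∀ {a b : V} (_p : T.Walk a b), a ∉ U' → b ∈ U' →
      ∃ u, u ∈ U' ∧ (GU T U' u).Reachable a u := by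
  intro a b p
  induction p with
  | nil => intro h1 h2; exact absurd h2 h1
  | @cons a c b hadj q ih =>
    intro ha hb
    by_cases hc : c ∈ U'
    · refine ⟨c, hc, SimpleGraph.Adj.reachable ?_⟩
      exact (gu_adj T U').mpr ⟨hadj, Or.inl ha, Or.inr rfl⟩
    · obtain ⟨u, hu, hr⟩ := ih hc hb
      refine ⟨u, hu, SimpleGraph.Reachable.trans (SimpleGraph.Adj.reachable ?_) hr⟩
      exact (gu_adj T U').mpr ⟨hadj, Or.inl ha, Or.inl hc⟩

lemma exists_attach (hconn : T.Connected) (hU : U'.Nonempty) {w : V} (hw : w ∉ U') :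
    ∃ u, u ∈ U' ∧ (GU T U' u).Reachable w u := by
  obtain ⟨u₀, hu₀⟩ := hU
  obtain ⟨p⟩ := hconn.preconnected w u₀
  exact exists_attach_of_walk T U' p hw hu₀

lemma mem_support_mapLe {G G' : SimpleGraph V} (h : G ≤ G') {a b : V}
    (p : G.Walk a b) {v : V} :
    v ∈ (p.mapLe h).support ↔ v ∈ p.support := by
  simp only [SimpleGraph.Walk.mapLe, SimpleGraph.Walk.support_map, List.mem_map,
    SimpleGraph.Hom.ofLE_apply]
  exact ⟨fun ⟨a, ha, he⟩ => he ▸ ha, fun hv => ⟨v, hv, rfl⟩⟩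

lemma isPath_append {G : SimpleGraph V} {a b c : V} {p : G.Walk a b} {q : G.Walk b c}
    (hp : p.IsPath) (hq : q.IsPath) (h : ∀ v, v ∈ p.support → v ∈ q.support → v = b) :
    (p.append q).IsPath := by
  rw [SimpleGraph.Walk.isPath_def, SimpleGraph.Walk.support_append]
  refine List.Nodup.append hp.support_nodup
    (hq.support_nodup.sublist (List.tail_sublist _)) ?_
  intro v hvp hvt
  have hvq : v ∈ q.support := List.mem_of_mem_tail hvt
  have hvb : v = b := h v hvp hvq
  subst hvb
  have := q.support_eq_cons ▸ hq.support_nodup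
  rw [List.nodup_cons] at this
  exact this.1 hvt

lemma induce_walk_to_walk {a b : U'} (p : (T.induce U').Walk a b) :
    ∃ q : T.Walk a.1 b.1, ∀ v ∈ q.support, v ∈ U' := by
  induction p with
  | nil =>
    rename_i a
    refine ⟨SimpleGraph.Walk.nil, ?_⟩
    intro v hv
    rw [SimpleGraph.Walk.support_nil, List.mem_singleton] at hv
    subst hv; exact a.2
  | @cons x y z h q ih =>
    obtain ⟨q', hq'⟩ := ih
    refine ⟨SimpleGraph.Walk.cons (by simpa using h : T.Adj x.1 y.1) q', ?_⟩
    intro v hv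
    rw [SimpleGraph.Walk.support_cons, List.mem_cons] at hv
    rcases hv with rfl | hv
    · exact x.2
    · exact hq' v hv

lemma attach_unique (hT : T.IsTree) (hconn : (T.induce U').Connected)
    {u u' w : V} (hu : u ∈ U') (hu' : u' ∈ U') (hw : w ∉ U')
    (h1 : (GU T U' u).Reachable w u) (h2 : (GU T U' u').Reachable w u') : u = u' := by
  by_contra hne
  -- path from w to u with support outside U' except at u
  have mkpath : ∀ (v : V), v ∈ U' → (GU T U' v).Reachable w v →
      ∃ p : T.Walk w v, p.IsPath ∧ ∀ x ∈ p.support, x = w ∨ x ∉ U' ∨ x = v := by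
    intro v hv hr
    obtain ⟨q⟩ := hr
    let q1 := q.toPath
    refine ⟨(q1 : (GU T U' v).Walk w v).mapLe (gu_le T U' v), (q1.2).mapLe _, ?_⟩
    intro x hx
    rw [mem_support_mapLe] at hx
    have hx' := q.support_toPath_subset hx
    rcases walk_support_onSet T (S := U'ᶜ ∪ {v}) q x hx' with rfl | hmem
    · exact Or.inl rfl
    · rcases hmem with hmem | hmem
      · exact Or.inr (Or.inl hmem)
      · exact Or.inr (Or.inr hmem)
  obtain ⟨p, hp, hps⟩ := mkpath u hu h1
  obtain ⟨p', hp', hps'⟩ := mkpath u' hu' h2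
  -- path from u to u' inside U'
  obtain ⟨w0⟩ := hconn ⟨u, hu⟩ ⟨u', hu'⟩
  obtain ⟨σw, hσw⟩ := induce_walk_to_walk T U' w0
  let σp := σw.toPath
  have hσsup : ∀ x ∈ (σp : T.Walk u u').support, x ∈ U' := by
    intro x hx
    exact hσw x (σw.support_toPath_subset hx)
  -- appended path w → u → u'
  have hr : (p.append (σp : T.Walk u u')).IsPath := by
    refine isPath_append hp σp.2 ?_
    intro v hvp hvσ
    have hvU : v ∈ U' := hσsup v hvσ
    rcases hps v hvp with rfl | hv | rfl
    · exact absurd hvU hw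
    · exact absurd hvU hv
    · rfl
  -- uniqueness of paths in the tree
  have huniq := hT.IsAcyclic.path_unique ⟨p.append (σp : T.Walk u u'), hr⟩ ⟨p', hp'⟩
  have hsup_eq : (p.append (σp : T.Walk u u')).support = p'.support := by
    rw [Subtype.ext_iff] at huniq
    simp only at huniq
    rw [huniq]
  have humem : u ∈ (p.append (σp : T.Walk u u')).support := by
    rw [SimpleGraph.Walk.mem_support_append_iff]
    exact Or.inl p.end_mem_support
  rw [hsup_eq] at humem
  rcases hps' u humem with rfl | h | h
  · exact hw hu
  · exact h hu
  · exact hne h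

/-- the inner boundary of `U'` as a finset. -/
noncomputable def bdryF : Finset V :=
  Finset.univ.filter (fun u => u ∈ U' ∧ ∃ w, w ∉ U' ∧ T.Adj u w)

/-- the set of vertices of the branch hanging off the boundary vertex `u`. -/
noncomputable def WF (u : V) : Finset V :=
  Finset.univ.filter (fun v => v ∉ U' ∧ (GU T U' u).Reachable v u)

/-- the branch hanging off `u`, as a graph. -/
def TU (u : V) : SimpleGraph V := compAt (GU T U' u) u

lemma mem_bdryF {u : V} : u ∈ bdryF T U' ↔ u ∈ U' ∧ ∃ w, w ∉ U' ∧ T.Adj u w := by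
  simp [bdryF]

lemma mem_WF {u v : V} : v ∈ WF T U' u ↔ v ∉ U' ∧ (GU T U' u).Reachable v u := by
  simp [WF]

lemma tu_adj {u a b : V} :
    (TU T U' u).Adj a b ↔
      (GU T U' u).Adj a b ∧ (GU T U' u).Reachable a u ∧ (GU T U' u).Reachable b u :=
  Iff.rfl

lemma tu_adj_mem {u a b : V} (hu : u ∈ U') (h : (TU T U' u).Adj a b) :
    (a = u ∨ a ∈ WF T U' u) ∧ (b = u ∨ b ∈ WF T U' u) := by
  obtain ⟨hadj, hra, hrb⟩ := h
  constructor
  · rcases reach_mem T U' hu hra with h' | h'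
    · exact Or.inl h'
    · exact Or.inr (mem_WF T U' |>.mpr ⟨h', hra⟩)
  · rcases reach_mem T U' hu hrb with h' | h'
    · exact Or.inl h'
    · exact Or.inr (mem_WF T U' |>.mpr ⟨h', hrb⟩)

lemma tu_edge_mem {u : V} (hu : u ∈ U') {e : Sym2 V} (he : e ∈ (TU T U' u).edgeFinset) :
    ∀ v ∈ e, v = u ∨ v ∈ WF T U' u := by
  rw [SimpleGraph.mem_edgeFinset] at he
  induction e with
  | _ a b =>
    rw [SimpleGraph.mem_edgeSet] at he
    intro v hv
    rw [Sym2.mem_iff] at hv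
    obtain ⟨ha, hb⟩ := tu_adj_mem T U' hu he
    rcases hv with rfl | rfl
    · exact ha
    · exact hb

lemma U'_nonempty (hconn : (T.induce U').Connected) : U'.Nonempty := by
  obtain ⟨⟨u, hu⟩⟩ := hconn.nonempty
  exact ⟨u, hu⟩

lemma wf_disjoint (hT : T.IsTree) (hconn : (T.induce U').Connected) :
    ∀ u ∈ bdryF T U', ∀ u' ∈ bdryF T U', u ≠ u' → Disjoint (WF T U' u) (WF T U' u') := by
  intro u hu u' hu' hne
  rw [Finset.disjoint_left]
  intro v hv hv'
  rw [mem_WF] at hv hv'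
  exact hne (attach_unique T U' hT hconn ((mem_bdryF T U').mp hu).1
    ((mem_bdryF T U').mp hu').1 hv.1 hv.2 hv'.2)

lemma vert_decomp (hT : T.IsTree) (hconn : (T.induce U').Connected) :
    Finset.univ.filter (fun v => v ∉ U') = (bdryF T U').biUnion (WF T U') := by
  ext v
  simp only [Finset.mem_filter, Finset.mem_univ, true_and, Finset.mem_biUnion]
  constructor
  · intro hv
    obtain ⟨u, hu, hr⟩ := exists_attach T U' hT.isConnected (U'_nonempty T U' hconn) hv
    obtain ⟨w', hw'⟩ := reach_bdry T U' hu hv hr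
    exact ⟨u, (mem_bdryF T U').mpr ⟨hu, w', hw'⟩, (mem_WF T U').mpr ⟨hv, hr⟩⟩
  · rintro ⟨u, _, hv⟩
    exact ((mem_WF T U').mp hv).1

lemma vert_sum (hT : T.IsTree) (hconn : (T.induce U').Connected) (f : V → ℝ) :
    ∑ v ∈ Finset.univ.filter (fun v => v ∉ U'), f v
      = ∑ u ∈ bdryF T U', ∑ v ∈ WF T U' u, f v := by
  rw [vert_decomp T U' hT hconn]
  exact Finset.sum_biUnion (fun u hu u' hu' hne => wf_disjoint T U' hT hconn u hu u' hu' hne)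

lemma edge_decomp (hT : T.IsTree) (hconn : (T.induce U').Connected) :
    T.edgeFinset
      = (onSet T U').edgeFinset ∪ (bdryF T U').biUnion (fun u => (TU T U' u).edgeFinset) := by
  ext e
  induction e with
  | _ a b =>
    simp only [SimpleGraph.mem_edgeFinset, SimpleGraph.mem_edgeSet, Finset.mem_union,
      Finset.mem_biUnion]
    constructor
    · intro hab
      by_cases ha : a ∈ U' <;> by_cases hb : b ∈ U'
      · exact Or.inl ⟨hab, ha, hb⟩
      · refine Or.inr ⟨a, (mem_bdryF T U').mpr ⟨ha, b, hb, hab⟩, ?_⟩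
        have hadj : (GU T U' a).Adj a b := (gu_adj T U').mpr ⟨hab, Or.inr rfl, Or.inl hb⟩
        exact ⟨hadj, SimpleGraph.Reachable.refl a, hadj.symm.reachable⟩
      · refine Or.inr ⟨b, (mem_bdryF T U').mpr ⟨hb, a, ha, hab.symm⟩, ?_⟩
        have hadj : (GU T U' b).Adj a b := (gu_adj T U').mpr ⟨hab, Or.inl ha, Or.inr rfl⟩
        exact ⟨hadj, hadj.reachable, SimpleGraph.Reachable.refl b⟩
      · obtain ⟨u, hu, hr⟩ := exists_attach T U' hT.isConnected (U'_nonempty T U' hconn) ha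
        obtain ⟨w', hw'⟩ := reach_bdry T U' hu ha hr
        have hadj : (GU T U' u).Adj a b := (gu_adj T U').mpr ⟨hab, Or.inl ha, Or.inl hb⟩
        exact Or.inr ⟨u, (mem_bdryF T U').mpr ⟨hu, w', hw'⟩,
          ⟨hadj, hr, (hadj.symm.reachable).trans hr⟩⟩
    · rintro (⟨hab, _, _⟩ | ⟨u, _, ⟨hadj, _, _⟩⟩)
      · exact hab
      · exact hadj.1

lemma onset_edge_mem {e : Sym2 V} (he : e ∈ (onSet T U').edgeFinset) : ∀ v ∈ e, v ∈ U' := by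
  rw [SimpleGraph.mem_edgeFinset] at he
  induction e with
  | _ a b =>
    rw [SimpleGraph.mem_edgeSet] at he
    intro v hv
    rw [Sym2.mem_iff] at hv
    rcases hv with rfl | rfl
    · exact he.2.1
    · exact he.2.2

lemma edge_disj1 :
    Disjoint ((onSet T U').edgeFinset)
      ((bdryF T U').biUnion (fun u => (TU T U' u).edgeFinset)) := by
  rw [Finset.disjoint_left]
  intro e he he'
  rw [Finset.mem_biUnion] at he'
  obtain ⟨u, hu, he'⟩ := he'
  have hu' : u ∈ U' := ((mem_bdryF T U').mp hu).1
  induction e with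
  | _ a b =>
    have h1 := onset_edge_mem T U' he
    have h2 := tu_edge_mem T U' hu' he'
    have hadj : T.Adj a b := by
      rw [SimpleGraph.mem_edgeFinset, SimpleGraph.mem_edgeSet] at he
      exact he.1
    have ha : a = u ∨ a ∈ WF T U' u := h2 a (by simp)
    have hb : b = u ∨ b ∈ WF T U' u := h2 b (by simp)
    have haU : a ∈ U' := h1 a (by simp)
    have hbU : b ∈ U' := h1 b (by simp)
    have ha' : a = u := by
      rcases ha with h | h
      · exact h
      · exact absurd haU ((mem_WF T U').mp h).1
    have hb' : b = u := by
      rcases hb with h | h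
      · exact h
      · exact absurd hbU ((mem_WF T U').mp h).1
    exact hadj.ne (ha'.trans hb'.symm)

lemma edge_disj2 (hT : T.IsTree) (hconn : (T.induce U').Connected) :
    ∀ u ∈ bdryF T U', ∀ u' ∈ bdryF T U', u ≠ u' →
      Disjoint ((TU T U' u).edgeFinset) ((TU T U' u').edgeFinset) := by
  intro u hu u' hu' hne
  have huU : u ∈ U' := ((mem_bdryF T U').mp hu).1
  have huU' : u' ∈ U' := ((mem_bdryF T U').mp hu').1
  rw [Finset.disjoint_left]
  intro e he he'
  induction e with
  | _ a b =>
    have h1 := tu_edge_mem T U' huU he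
    have h2 := tu_edge_mem T U' huU' he'
    have ha := h1 a (by simp)
    have ha' := h2 a (by simp)
    rcases ha with rfl | hmem
    · rcases ha' with h | h
      · exact hne h
      · exact ((mem_WF T U').mp h).1 huU
    · rcases ha' with rfl | hmem'
      · exact ((mem_WF T U').mp hmem).1 huU'
      · exact hne (attach_unique T U' hT hconn huU huU'
          ((mem_WF T U').mp hmem).1 ((mem_WF T U').mp hmem).2 ((mem_WF T U').mp hmem').2)

lemma edge_sum (hT : T.IsTree) (hconn : (T.induce U').Connected) (F : Sym2 V → ℝ) :
    ∑ e ∈ T.edgeFinset, F e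
      = ∑ e ∈ (onSet T U').edgeFinset, F e
        + ∑ u ∈ bdryF T U', ∑ e ∈ (TU T U' u).edgeFinset, F e := by
  rw [edge_decomp T U' hT hconn, Finset.sum_union (edge_disj1 T U'),
    Finset.sum_biUnion (fun u hu u' hu' hne => edge_disj2 T U' hT hconn u hu u' hu' hne)]

lemma reach_filter {u : V} (hu : u ∈ U') :
    Finset.univ.filter (fun v => (GU T U' u).Reachable v u) = insert u (WF T U' u) := by
  ext v
  simp only [Finset.mem_filter, Finset.mem_univ, true_and, Finset.mem_insert]
  constructor
  · intro hr
    rcases reach_mem T U' hu hr with h | h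
    · exact Or.inl h
    · exact Or.inr ((mem_WF T U').mpr ⟨h, hr⟩)
  · rintro (rfl | h)
    · exact SimpleGraph.Reachable.refl v
    · exact ((mem_WF T U').mp h).2

lemma u_not_mem_WF {u : V} (hu : u ∈ U') : u ∉ WF T U' u := by
  rw [mem_WF]
  exact fun h => h.1 hu

end Graph

/-! ### Ising quantities on branches -/

section Ising

variable (T : SimpleGraph V) (U' : Set V) (β : ℝ) (B : V → ℝ)

/-- the fields restricted to the branch at `u`. -/
noncomputable def Bres (u : V) : V → ℝ :=
  fun v => if (GU T U' u).Reachable v u then B v else 0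

/-- the partition function of the branch at `u` with pinned spin `c` at `u`. -/
noncomputable def Zb (u : V) (c : Bool) : ℝ :=
  ∑ z : V → Bool,
    if z u = c then Real.exp (ham (TU T U' u) β (Bres T U' B u) z) else 0

lemma Zb_pos (u : V) (c : Bool) : 0 < Zb T U' β B u c := by
  apply Finset.sum_pos'
  · intro z _
    by_cases h : z u = c
    · rw [if_pos h]; exact (Real.exp_pos _).le
    · rw [if_neg h]
  · refine ⟨fun _ => c, Finset.mem_univ _, ?_⟩
    rw [if_pos rfl]
    exact Real.exp_pos _

lemma ham_TU {u : V} (hu : u ∈ U') (z : V → Bool) :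
    ham (TU T U' u) β (Bres T U' B u) z
      = β * ∑ e ∈ (TU T U' u).edgeFinset, edgeTerm z e
        + (B u * spin (z u) + ∑ v ∈ WF T U' u, B v * spin (z v)) := by
  unfold ham Bres
  congr 1
  calc ∑ v, (if (GU T U' u).Reachable v u then B v else 0) * spin (z v)
      = ∑ v, (if (GU T U' u).Reachable v u then B v * spin (z v) else 0) := by
        apply Finset.sum_congr rfl
        intro v _
        by_cases h : (GU T U' u).Reachable v u <;> simp [h]
    _ = ∑ v ∈ Finset.univ.filter (fun v => (GU T U' u).Reachable v u),
          B v * spin (z v) := (Finset.sum_filter _ _).symm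
    _ = B u * spin (z u) + ∑ v ∈ WF T U' u, B v * spin (z v) := by
        rw [reach_filter T U' hu, Finset.sum_insert (u_not_mem_WF T U' hu)]

lemma bdryMag_eq (u : V) :
    bdryMag T β B U' u
      = (Zb T U' β B u true - Zb T U' β B u false)
        / (Zb T U' β B u true + Zb T U' β B u false) := by
  have hgraph : compAt (onSet T (U'ᶜ ∪ {u})) u = TU T U' u := rfl
  have hfield : (fun v => if (onSet T (U'ᶜ ∪ {u})).Reachable v u then B v else 0)
      = Bres T U' B u := rfl
  unfold bdryMag
  rw [hgraph, hfield]
  unfold isingExp Zb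
  congr 1
  · rw [← Finset.sum_sub_distrib]
    apply Finset.sum_congr rfl
    intro z _
    cases h : z u <;> simp [h, spin]
  · rw [← Finset.sum_add_distrib]
    apply Finset.sum_congr rfl
    intro z _
    cases h : z u <;> simp [h]

lemma Zb_eq (u : V) (c : Bool) :
    Zb T U' β B u c
      = Real.sqrt (Zb T U' β B u true * Zb T U' β B u false)
        * Real.exp (atanh (bdryMag T β B U' u) * spin c) := by
  rw [bdryMag_eq, sqrt_mul_exp_atanh (Zb_pos T U' β B u true) (Zb_pos T U' β B u false)]
  cases c <;> simp

lemma sum_Gu {u : V} (hu : u ∈ U') (c : Bool) :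
    ∑ z : V → Bool,
      Real.exp (β * ∑ e ∈ (TU T U' u).edgeFinset, edgeTerm (Function.update z u c) e
        + ∑ v ∈ WF T U' u, B v * spin (z v))
      = 2 * (Real.exp (-(B u * spin c)) * Zb T U' β B u c) := by
  set G : (V → Bool) → ℝ := fun y =>
    Real.exp (β * ∑ e ∈ (TU T U' u).edgeFinset, edgeTerm y e
      + ∑ v ∈ WF T U' u, B v * spin (y v)) with hG
  have hpt : ∀ z : V → Bool,
      Real.exp (β * ∑ e ∈ (TU T U' u).edgeFinset, edgeTerm (Function.update z u c) e
        + ∑ v ∈ WF T U' u, B v * spin (z v)) = G (Function.update z u c) := by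
    intro z
    rw [hG]
    simp only
    congr 2
    apply Finset.sum_congr rfl
    intro v hv
    have hvu : v ≠ u := fun h => (u_not_mem_WF T U' hu) (by rwa [h] at hv)
    rw [Function.update_of_ne hvu]
  rw [Finset.sum_congr rfl (fun z _ => hpt z), sum_update u c G]
  congr 1
  unfold Zb
  rw [Finset.mul_sum]
  apply Finset.sum_congr rfl
  intro z _
  by_cases h : z u = c
  · rw [if_pos h, if_pos h, ham_TU T U' β B hu z, ← Real.exp_add]
    simp only [hG]
    congr 1
    rw [h]
    ring
  · rw [if_neg h, if_neg h, mul_zero]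

end Ising

/-! ### counting configurations that agree on `U'` -/

section Count

variable (U' : Set V)

noncomputable def cnt (x : V → Bool) : ℝ :=
  ∑ z : V → Bool, if (∀ u ∈ U', z u = x u) then (1 : ℝ) else 0

lemma cnt_pos (x : V → Bool) : 0 < cnt U' x := by
  apply Finset.sum_pos'
  · intro z _
    by_cases h : ∀ u ∈ U', z u = x u
    · rw [if_pos h]; norm_num
    · rw [if_neg h]
  · refine ⟨x, Finset.mem_univ _, ?_⟩
    rw [if_pos (fun u _ => rfl)]
    norm_num

noncomputable def xorEquiv (x y : V → Bool) : (V → Bool) ≃ (V → Bool) :=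
  Function.Involutive.toPerm (fun z v => xor (z v) (xor (x v) (y v))) (by
    intro z
    funext v
    cases h1 : z v <;> cases h2 : x v <;> cases h3 : y v <;> simp [h1, h2, h3])

lemma cnt_const (x y : V → Bool) : cnt U' x = cnt U' y := by
  unfold cnt
  rw [← Equiv.sum_comp (xorEquiv x y)
    (fun z => if (∀ u ∈ U', z u = y u) then (1 : ℝ) else 0)]
  apply Finset.sum_congr rfl
  intro z _
  have hval : ∀ v, (xorEquiv x y) z v = xor (z v) (xor (x v) (y v)) := fun v => rfl
  have hiff : (∀ u ∈ U', (xorEquiv x y) z u = y u) ↔ (∀ u ∈ U', z u = x u) := by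
    apply forall₂_congr
    intro u _
    rw [hval u]
    cases h1 : z u <;> cases h2 : x u <;> cases h3 : y u <;> simp [h1, h2, h3]
  by_cases h : ∀ u ∈ U', z u = x u
  · rw [if_pos h, if_pos (hiff.mpr h)]
  · rw [if_neg h, if_neg (fun h' => h (hiff.mp h'))]

lemma sum_agree_depOn {f : (V → Bool) → ℝ} (hf : DepOn f U') (x : V → Bool) :
    ∑ z : V → Bool, (if ∀ u ∈ U', z u = x u then f z else 0) = cnt U' x * f x := by
  unfold cnt
  rw [Finset.sum_mul]
  apply Finset.sum_congr rfl
  intro z _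
  by_cases h : ∀ u ∈ U', z u = x u
  · rw [if_pos h, if_pos h, one_mul]
    exact hf (fun v hv => h v hv)
  · rw [if_neg h, if_neg h, zero_mul]

end Count

/-! ### the central computation -/

section Crux

variable (T : SimpleGraph V) (U' : Set V) (β : ℝ) (B : V → ℝ)

lemma crux (hT : T.IsTree) (hconn : (T.induce U').Connected) :
    ∃ C : ℝ, 0 < C ∧ ∀ x : V → Bool,
      (∑ z : V → Bool, (if ∀ u ∈ U', z u = x u then Real.exp (ham T β B z) else 0))
        = C * Real.exp (ham (onSet T U') β
            (fun u => if u ∈ U' then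
              (if ∃ w, w ∉ U' ∧ T.Adj u w then atanh (bdryMag T β B U' u) else B u)
            else 0) x) := by
  classical
  set B'' : V → ℝ := fun u => if u ∈ U' then
      (if ∃ w, w ∉ U' ∧ T.Adj u w then atanh (bdryMag T β B U' u) else B u)
    else 0 with hB''
  set P : ℝ := 2 ^ Fintype.card V with hP
  have hPpos : 0 < P := by positivity
  set k := (bdryF T U').card with hk
  set Csqrt : ℝ := ∏ u ∈ bdryF T U',
      (2 * Real.sqrt (Zb T U' β B u true * Zb T U' β B u false)) with hCsqrt
  have hCsqrtpos : 0 < Csqrt := by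
    rw [hCsqrt]
    apply Finset.prod_pos
    intro u _
    have := Real.sqrt_pos.mpr (mul_pos (Zb_pos T U' β B u true) (Zb_pos T U' β B u false))
    positivity
  have hcntpos := cnt_pos U' (fun _ => true)
  refine ⟨cnt U' (fun _ => true) * Csqrt / P ^ k, by positivity, ?_⟩
  intro x
  set χ : (V → Bool) → ℝ := fun z => if ∀ u ∈ U', z u = x u then (1 : ℝ) else 0 with hχ
  set PU : (V → Bool) → ℝ := fun z => χ z *
      Real.exp (β * ∑ e ∈ (onSet T U').edgeFinset, edgeTerm z e
        + ∑ v ∈ Finset.univ.filter (fun v => v ∈ U'), B v * spin (z v)) with hPU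
  set F : V → (V → Bool) → ℝ := fun u z =>
      Real.exp (β * ∑ e ∈ (TU T U' u).edgeFinset, edgeTerm (Function.update z u (x u)) e
        + ∑ v ∈ WF T U' u, B v * spin (z v)) with hF
  -- Step A : pointwise factorization
  have stepA : ∀ z : V → Bool,
      (if ∀ u ∈ U', z u = x u then Real.exp (ham T β B z) else 0)
        = PU z * ∏ u ∈ bdryF T U', F u z := by
    intro z
    by_cases hag : ∀ u ∈ U', z u = x u
    · rw [if_pos hag]
      have hF' : ∀ u ∈ bdryF T U', F u z
          = Real.exp (β * ∑ e ∈ (TU T U' u).edgeFinset, edgeTerm z e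
              + ∑ v ∈ WF T U' u, B v * spin (z v)) := by
        intro u hu
        rw [hF]
        simp only
        rw [← hag u ((mem_bdryF T U').mp hu).1, Function.update_eq_self]
      rw [hPU]
      simp only [hχ]
      rw [if_pos hag, one_mul, Finset.prod_congr rfl hF', ← Real.exp_sum, ← Real.exp_add]
      congr 1
      unfold ham
      rw [edge_sum T U' hT hconn (edgeTerm z),
        ← Finset.sum_filter_add_sum_filter_not Finset.univ (fun v => v ∈ U')
          (fun v => B v * spin (z v)),
        vert_sum T U' hT hconn (fun v => B v * spin (z v)),
        Finset.sum_add_distrib, ← Finset.mul_sum]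
      ring
    · rw [if_neg hag, hPU]
      simp only [hχ]
      rw [if_neg hag, zero_mul, zero_mul]
  -- dependence properties
  have hdepPU : DepOn PU U' := by
    intro z z' hzz
    rw [hPU]
    simp only
    have hiff : (∀ u ∈ U', z u = x u) ↔ (∀ u ∈ U', z' u = x u) := by
      constructor <;> intro h u hu
      · rw [← hzz u hu]; exact h u hu
      · rw [hzz u hu]; exact h u hu
    have hχeq : χ z = χ z' := by
      rw [hχ]
      simp only
      by_cases h : ∀ u ∈ U', z u = x u
      · rw [if_pos h, if_pos (hiff.mp h)]
      · rw [if_neg h, if_neg (fun h' => h (hiff.mpr h'))]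
    have he : ∑ e ∈ (onSet T U').edgeFinset, edgeTerm z e
        = ∑ e ∈ (onSet T U').edgeFinset, edgeTerm z' e :=
      Finset.sum_congr rfl (fun e he =>
        edgeTerm_congr (fun v hv => hzz v (onset_edge_mem T U' he v hv)))
    have hv : ∑ v ∈ Finset.univ.filter (fun v => v ∈ U'), B v * spin (z v)
        = ∑ v ∈ Finset.univ.filter (fun v => v ∈ U'), B v * spin (z' v) :=
      Finset.sum_congr rfl (fun v hv => by
        rw [hzz v (by simpa using hv)])
    rw [hχeq, he, hv]
  have hdepF : ∀ u ∈ bdryF T U', DepOn (F u) ↑(WF T U' u) := by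
    intro u hu z z' hzz
    have huU : u ∈ U' := ((mem_bdryF T U').mp hu).1
    rw [hF]
    simp only
    have hupdeq : ∀ v, (v = u ∨ v ∈ WF T U' u) →
        Function.update z u (x u) v = Function.update z' u (x u) v := by
      intro v hv
      rcases hv with rfl | hv
      · rw [Function.update_self, Function.update_self]
      · have hvu : v ≠ u := fun h => (u_not_mem_WF T U' huU) (by rwa [h] at hv)
        rw [Function.update_of_ne hvu, Function.update_of_ne hvu]
        exact hzz v (Finset.mem_coe.mpr hv)
    have he : ∑ e ∈ (TU T U' u).edgeFinset, edgeTerm (Function.update z u (x u)) e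
        = ∑ e ∈ (TU T U' u).edgeFinset, edgeTerm (Function.update z' u (x u)) e :=
      Finset.sum_congr rfl (fun e he =>
        edgeTerm_congr (fun v hv => hupdeq v (tu_edge_mem T U' huU he v hv)))
    have hv : ∑ v ∈ WF T U' u, B v * spin (z v)
        = ∑ v ∈ WF T U' u, B v * spin (z' v) :=
      Finset.sum_congr rfl (fun v hv => by rw [hzz v (Finset.mem_coe.mpr hv)])
    rw [he, hv]
  have hdepProd : DepOn (fun z => ∏ u ∈ bdryF T U', F u z) U'ᶜ := by
    apply DepOn.prod (bdryF T U') (fun u => ↑(WF T U' u)) F hdepF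
    intro u hu v hv
    exact Set.mem_compl (((mem_WF T U').mp (Finset.mem_coe.mp hv)).1)
  have hdisjS : ∀ u ∈ bdryF T U', ∀ u' ∈ bdryF T U', u ≠ u' →
      Disjoint (↑(WF T U' u) : Set V) ↑(WF T U' u') := by
    intro u hu u' hu' hne
    exact Finset.disjoint_coe.mpr (wf_disjoint T U' hT hconn u hu u' hu' hne)
  -- splitting the sums
  have hsplit1 : (∑ z : V → Bool, PU z) * (∑ z : V → Bool, ∏ u ∈ bdryF T U', F u z)
      = (∑ z : V → Bool, PU z * ∏ u ∈ bdryF T U', F u z) * P :=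
    sum_mul_split hdepPU hdepProd
  have hsplit2 : (∑ z : V → Bool, ∏ u ∈ bdryF T U', F u z) * P ^ k
      = P * ∏ u ∈ bdryF T U', (∑ z : V → Bool, F u z) :=
    sum_prod_split (bdryF T U') (fun u => ↑(WF T U' u)) F hdepF hdisjS
  -- evaluating the factors
  have hPUsum : ∑ z : V → Bool, PU z
      = cnt U' x * Real.exp (β * ∑ e ∈ (onSet T U').edgeFinset, edgeTerm x e
          + ∑ v ∈ Finset.univ.filter (fun v => v ∈ U'), B v * spin (x v)) := by
    have hdep : DepOn (fun z : V → Bool =>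
        Real.exp (β * ∑ e ∈ (onSet T U').edgeFinset, edgeTerm z e
          + ∑ v ∈ Finset.univ.filter (fun v => v ∈ U'), B v * spin (z v))) U' := by
      intro z z' hzz
      simp only
      have he : ∑ e ∈ (onSet T U').edgeFinset, edgeTerm z e
          = ∑ e ∈ (onSet T U').edgeFinset, edgeTerm z' e :=
        Finset.sum_congr rfl (fun e he =>
          edgeTerm_congr (fun v hv => hzz v (onset_edge_mem T U' he v hv)))
      have hv : ∑ v ∈ Finset.univ.filter (fun v => v ∈ U'), B v * spin (z v)
          = ∑ v ∈ Finset.univ.filter (fun v => v ∈ U'), B v * spin (z' v) :=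
        Finset.sum_congr rfl (fun v hv => by rw [hzz v (by simpa using hv)])
      rw [he, hv]
    have hpt : ∀ z : V → Bool, PU z = (if ∀ u ∈ U', z u = x u then
        Real.exp (β * ∑ e ∈ (onSet T U').edgeFinset, edgeTerm z e
          + ∑ v ∈ Finset.univ.filter (fun v => v ∈ U'), B v * spin (z v)) else 0) := by
      intro z
      rw [hPU]
      simp only [hχ]
      by_cases h : ∀ u ∈ U', z u = x u
      · rw [if_pos h, if_pos h, one_mul]
      · rw [if_neg h, if_neg h, zero_mul]
    rw [Finset.sum_congr rfl (fun z _ => hpt z)]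
    exact sum_agree_depOn U' hdep x
  have hFsum : ∀ u ∈ bdryF T U', (∑ z : V → Bool, F u z)
      = (2 * Real.sqrt (Zb T U' β B u true * Zb T U' β B u false))
        * Real.exp ((atanh (bdryMag T β B U' u) - B u) * spin (x u)) := by
    intro u hu
    have huU : u ∈ U' := ((mem_bdryF T U').mp hu).1
    have h1 : ∑ z : V → Bool, F u z
        = 2 * (Real.exp (-(B u * spin (x u))) * Zb T U' β B u (x u)) := by
      rw [hF]
      exact sum_Gu T U' β B huU (x u)
    rw [h1, Zb_eq T U' β B u (x u)]
    rw [sub_mul, Real.exp_sub, Real.exp_neg]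
    have h2 := Real.exp_ne_zero (B u * spin (x u))
    field_simp
  -- put everything together
  have hPk : (0:ℝ) < P * P ^ k := by positivity
  apply mul_right_cancel₀ (ne_of_gt hPk)
  have hexp : Real.exp (β * ∑ e ∈ (onSet T U').edgeFinset, edgeTerm x e
        + ∑ v ∈ Finset.univ.filter (fun v => v ∈ U'), B v * spin (x v))
      * Real.exp (∑ u ∈ bdryF T U', (atanh (bdryMag T β B U' u) - B u) * spin (x u))
      = Real.exp (ham (onSet T U') β B'' x) := by
    rw [← Real.exp_add]
    congr 1
    unfold ham
    have hfield : ∑ v, B'' v * spin (x v)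
        = ∑ v ∈ Finset.univ.filter (fun v => v ∈ U'), B v * spin (x v)
          + ∑ u ∈ bdryF T U', (atanh (bdryMag T β B U' u) - B u) * spin (x u) := by
      rw [← Finset.sum_filter_add_sum_filter_not Finset.univ (fun v => v ∈ U')
        (fun v => B'' v * spin (x v))]
      have hzero : ∑ v ∈ Finset.univ.filter (fun v => ¬ v ∈ U'), B'' v * spin (x v) = 0 := by
        apply Finset.sum_eq_zero
        intro v hv
        have : v ∉ U' := (Finset.mem_filter.mp hv).2
        rw [hB'']
        simp only
        rw [if_neg this, zero_mul]
      rw [hzero, add_zero]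
      have hsub : bdryF T U' ⊆ Finset.univ.filter (fun v => v ∈ U') := by
        intro u hu
        simp only [Finset.mem_filter, Finset.mem_univ, true_and]
        exact ((mem_bdryF T U').mp hu).1
      have hbdryterm : ∑ u ∈ bdryF T U', (atanh (bdryMag T β B U' u) - B u) * spin (x u)
          = ∑ u ∈ Finset.univ.filter (fun v => v ∈ U'), (B'' u - B u) * spin (x u) := by
        have hstep : ∑ u ∈ bdryF T U', (atanh (bdryMag T β B U' u) - B u) * spin (x u)
            = ∑ u ∈ bdryF T U', (B'' u - B u) * spin (x u) := by
          apply Finset.sum_congr rfl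
          intro u hu
          obtain ⟨huU, hex⟩ := (mem_bdryF T U').mp hu
          rw [hB'']
          simp only
          rw [if_pos huU, if_pos hex]
        rw [hstep]
        apply Finset.sum_subset hsub
        intro v hvU hvB
        have hvU' : v ∈ U' := (Finset.mem_filter.mp hvU).2
        have hnw : ¬ ∃ w, w ∉ U' ∧ T.Adj v w := fun hw =>
          hvB ((mem_bdryF T U').mpr ⟨hvU', hw⟩)
        rw [hB'']
        simp only
        rw [if_pos hvU', if_neg hnw, sub_self, zero_mul]
      rw [hbdryterm, ← Finset.sum_add_distrib]
      apply Finset.sum_congr rfl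
      intro v _
      ring
    rw [hfield]
    ring
  calc (∑ z : V → Bool, (if ∀ u ∈ U', z u = x u then Real.exp (ham T β B z) else 0))
        * (P * P ^ k)
      = ((∑ z : V → Bool, PU z * ∏ u ∈ bdryF T U', F u z) * P) * P ^ k := by
        rw [Finset.sum_congr rfl (fun z _ => stepA z)]; ring
    _ = ((∑ z : V → Bool, PU z) * (∑ z : V → Bool, ∏ u ∈ bdryF T U', F u z)) * P ^ k := by
        rw [hsplit1]
    _ = (∑ z : V → Bool, PU z) * ((∑ z : V → Bool, ∏ u ∈ bdryF T U', F u z) * P ^ k) := by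
        ring
    _ = (∑ z : V → Bool, PU z) * (P * ∏ u ∈ bdryF T U', (∑ z : V → Bool, F u z)) := by
        rw [hsplit2]
    _ = (cnt U' x * Real.exp (β * ∑ e ∈ (onSet T U').edgeFinset, edgeTerm x e
          + ∑ v ∈ Finset.univ.filter (fun v => v ∈ U'), B v * spin (x v)))
        * (P * (Csqrt * Real.exp (∑ u ∈ bdryF T U',
            (atanh (bdryMag T β B U' u) - B u) * spin (x u)))) := by
        rw [hPUsum, Finset.prod_congr rfl hFsum, Finset.prod_mul_distrib, ← Real.exp_sum,
          hCsqrt]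
    _ = cnt U' x * Csqrt * P *
          (Real.exp (β * ∑ e ∈ (onSet T U').edgeFinset, edgeTerm x e
            + ∑ v ∈ Finset.univ.filter (fun v => v ∈ U'), B v * spin (x v))
          * Real.exp (∑ u ∈ bdryF T U', (atanh (bdryMag T β B U' u) - B u) * spin (x u))) := by
        ring
    _ = cnt U' x * Csqrt * P * Real.exp (ham (onSet T U') β B'' x) := by rw [hexp]
    _ = (cnt U' (fun _ => true) * Csqrt / P ^ k * Real.exp (ham (onSet T U') β B'' x))
          * (P * P ^ k) := by
        rw [cnt_const U' x (fun _ => true)]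
        field_simp

end Crux

end TM

/-- **Marginal of an Ising measure on a tree** (Proposition: marginals on a
connected subset `U'` of a finite tree).  The marginal of `ν^{β,B}_T` on
`{-1,+1}^{U'}` is the Ising measure on the induced subgraph `T[U']` with
inverse temperature `β` and fields `B'_u = atanh(⟨x_u⟩_W)` on the inner
boundary `∂_*U'` and `B'_u = B_u` elsewhere on `U'`. -/
theorem tree_marginal_is_ising (T : SimpleGraph V) (hT : T.IsTree)
    (β : ℝ) (hβ : 0 ≤ β) (B : V → ℝ) (U' : Set V)
    (hconn : ((T.induce U')).Connected) :
    ∀ x : V → Bool,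
      isingProbAgree T β B U' x =
        isingProbAgree (onSet T U') β
          (fun u => if u ∈ U' then
              (if ∃ w, w ∉ U' ∧ T.Adj u w then atanh (bdryMag T β B U' u) else B u)
            else 0)
          U' x := by
  classical
  intro x
  obtain ⟨C, hC, hcrux⟩ := TM.crux T U' β B hT hconn
  set B'' : V → ℝ := fun u => if u ∈ U' then
      (if ∃ w, w ∉ U' ∧ T.Adj u w then atanh (bdryMag T β B U' u) else B u)
    else 0 with hB''
  have hdep : TM.DepOn (fun z : V → Bool => Real.exp (ham (onSet T U') β B'' z)) U' := by
    intro z z' hzz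
    simp only
    congr 1
    unfold ham
    have he : ∑ e ∈ (onSet T U').edgeFinset, edgeTerm z e
        = ∑ e ∈ (onSet T U').edgeFinset, edgeTerm z' e :=
      Finset.sum_congr rfl (fun e he =>
        TM.edgeTerm_congr (fun v hv => hzz v (TM.onset_edge_mem T U' he v hv)))
    have hv : ∑ v, B'' v * spin (z v) = ∑ v, B'' v * spin (z' v) := by
      apply Finset.sum_congr rfl
      intro v _
      by_cases hvU : v ∈ U'
      · rw [hzz v hvU]
      · rw [hB'']
        simp only
        rw [if_neg hvU, zero_mul, zero_mul]
    rw [he, hv]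
  have hnum' : (∑ z : V → Bool,
      (if ∀ u ∈ U', z u = x u then Real.exp (ham (onSet T U') β B'' z) else 0))
      = TM.cnt U' x * Real.exp (ham (onSet T U') β B'' x) :=
    TM.sum_agree_depOn U' hdep x
  have hcnt_z : ∀ z : V → Bool,
      (∑ y : V → Bool, if ∀ u ∈ U', z u = y u then Real.exp (ham T β B z) else 0)
        = Real.exp (ham T β B z) * TM.cnt U' x := by
    intro z
    have hpt : ∀ y : V → Bool,
        (if ∀ u ∈ U', z u = y u then Real.exp (ham T β B z) else 0)
          = Real.exp (ham T β B z) * (if ∀ u ∈ U', y u = z u then (1:ℝ) else 0) := by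
      intro y
      have hiff : (∀ u ∈ U', z u = y u) ↔ (∀ u ∈ U', y u = z u) :=
        forall₂_congr (fun u _ => eq_comm)
      by_cases h : ∀ u ∈ U', z u = y u
      · rw [if_pos h, if_pos (hiff.mp h), mul_one]
      · rw [if_neg h, if_neg (fun h' => h (hiff.mpr h')), mul_zero]
    rw [Finset.sum_congr rfl (fun y _ => hpt y), ← Finset.mul_sum]
    have : (∑ y : V → Bool, if ∀ u ∈ U', y u = z u then (1:ℝ) else 0) = TM.cnt U' z := rfl
    rw [this, TM.cnt_const U' z x]
  have hden : (∑ z : V → Bool, Real.exp (ham T β B z)) * TM.cnt U' x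
      = C * ∑ z : V → Bool, Real.exp (ham (onSet T U') β B'' z) := by
    calc (∑ z : V → Bool, Real.exp (ham T β B z)) * TM.cnt U' x
        = ∑ z : V → Bool, Real.exp (ham T β B z) * TM.cnt U' x := Finset.sum_mul _ _ _
      _ = ∑ z : V → Bool, ∑ y : V → Bool,
            (if ∀ u ∈ U', z u = y u then Real.exp (ham T β B z) else 0) :=
          (Finset.sum_congr rfl (fun z _ => (hcnt_z z).symm))
      _ = ∑ y : V → Bool, ∑ z : V → Bool,
            (if ∀ u ∈ U', z u = y u then Real.exp (ham T β B z) else 0) := Finset.sum_comm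
      _ = ∑ y : V → Bool, C * Real.exp (ham (onSet T U') β B'' y) :=
          Finset.sum_congr rfl (fun y _ => hcrux y)
      _ = C * ∑ z : V → Bool, Real.exp (ham (onSet T U') β B'' z) :=
          (Finset.mul_sum _ _ _).symm
  have hdenT : 0 < ∑ z : V → Bool, Real.exp (ham T β B z) :=
    Finset.sum_pos (fun z _ => Real.exp_pos _) ⟨fun _ => true, Finset.mem_univ _⟩
  have hden' : 0 < ∑ z : V → Bool, Real.exp (ham (onSet T U') β B'' z) :=
    Finset.sum_pos (fun z _ => Real.exp_pos _) ⟨fun _ => true, Finset.mem_univ _⟩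
  have hcnt : 0 < TM.cnt U' x := TM.cnt_pos U' x
  unfold isingProbAgree
  rw [hcrux x, hnum']
  rw [div_eq_div_iff (ne_of_gt hdenT) (ne_of_gt hden')]
  linear_combination (-Real.exp (ham (onSet T U') β B'' x)) * hden
end

section
/- Let n ≥ 1 and let a : Fin n × Fin n → ℝ satisfy a_{ij} ≥ 0, a_{ij} = a_{ji} for all i,j, and Σ_j a_{ij} = 1 for every i. Let x ∈ {−1,+1}^n with Σ_j x_j ≥ 0, and let η ≥ 0. Then the number of indices i with Σ_j x_j a_{ij} > −η is at least n·η/(1+η). -/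
open Finset

/-- **Occupation-measure averaging lemma.**
If `a` is a symmetric nonnegative `n × n` matrix with all row sums equal to `1`
and `x ∈ {-1,+1}^n` has `Σ_j x_j ≥ 0`, then for any `η ≥ 0` at least
`n·η/(1+η)` indices `i` satisfy `Σ_j x_j a_{ij} > -η`. -/
theorem occupation_average_lower_bound (n : ℕ) (hn : 1 ≤ n)
    (a : Fin n → Fin n → ℝ)
    (ha0 : ∀ i j, 0 ≤ a i j)
    (hasymm : ∀ i j, a i j = a j i)
    (harow : ∀ i, ∑ j, a i j = 1)
    (x : Fin n → ℝ) (hx : ∀ j, x j = 1 ∨ x j = -1)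
    (hxsum : 0 ≤ ∑ j, x j)
    (η : ℝ) (hη : 0 ≤ η) :
    (n : ℝ) * η / (1 + η) ≤
      ((Finset.univ.filter (fun i => -η < ∑ j, x j * a i j)).card : ℝ) := by
  set f : Fin n → ℝ := fun i => ∑ j, x j * a i j with hf
  set S : Finset (Fin n) := Finset.univ.filter (fun i => -η < f i) with hS
  have hfle : ∀ i, f i ≤ 1 := by
    intro i
    calc f i ≤ ∑ j, a i j := by
          apply Finset.sum_le_sum
          intro j _
          have hxj : x j ≤ 1 := by rcases hx j with h | h <;> rw [h] <;> norm_num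
          nlinarith [ha0 i j]
      _ = 1 := harow i
  have hcol : ∀ j, ∑ i, a i j = 1 := by
    intro j
    rw [show (∑ i, a i j) = ∑ i, a j i from Finset.sum_congr rfl fun i _ => hasymm i j]
    exact harow j
  have hsumf : ∑ i, f i = ∑ j, x j := by
    simp only [hf]
    rw [Finset.sum_comm]
    exact Finset.sum_congr rfl fun j _ => by rw [← Finset.mul_sum, hcol, mul_one]
  have hsplit : ∑ i, f i = ∑ i ∈ S, f i + ∑ i ∈ Sᶜ, f i := by
    rw [Finset.sum_add_sum_compl]
  have h1 : ∑ i ∈ S, f i ≤ S.card := by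
    calc ∑ i ∈ S, f i ≤ ∑ i ∈ S, (1 : ℝ) := Finset.sum_le_sum fun i _ => hfle i
      _ = S.card := by simp
  have h2 : ∑ i ∈ Sᶜ, f i ≤ Sᶜ.card * (-η) := by
    calc ∑ i ∈ Sᶜ, f i ≤ ∑ i ∈ Sᶜ, (-η) := by
          apply Finset.sum_le_sum
          intro i hi
          simp only [hS, Finset.mem_compl, Finset.mem_filter, Finset.mem_univ, true_and,
            not_lt] at hi
          exact hi
      _ = Sᶜ.card * (-η) := by rw [Finset.sum_const, nsmul_eq_mul]
  have hcardc : (Sᶜ.card : ℝ) = n - S.card := by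
    have := Finset.card_compl S
    rw [this]
    have hle : S.card ≤ n := by simpa using Finset.card_le_univ S
    simp only [Fintype.card_fin]
    rw [Nat.cast_sub hle]
  have h0 : (0:ℝ) ≤ ∑ i, f i := hsumf ▸ hxsum
  have key : (n : ℝ) * η ≤ S.card * (1 + η) := by
    rw [hsplit] at h0
    rw [hcardc] at h2
    nlinarith
  rw [div_le_iff₀ (by linarith)]
  exact key
end

section
/- Let (Ω, F, P) be a probability space, Δ : Ω → [0,∞) an integrable random variable, and (ρ_l)_{l∈ℕ} a sequence of measurable real-valued functions on Ω. For η > 0 define 𝔈(η) := liminf_{ε→0⁺} liminf_{l→∞} E[ Δ · 1{ρ_l ∈ [2η−ε, 2η+ε)} ]. Then for every positive integer K the set {η > 0 : 𝔈(η) ≥ 1/K} has at most 2·E[Δ]·K elements; in particular, the set {η > 0 : 𝔈(η) > 0} is countable. -/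
open MeasureTheory Filter

private lemma sum_liminf_le_aux {ι : Type*} (C : ℝ) (s : Finset ι) (u : ι → ℕ → ℝ)
    (h0 : ∀ i l, 0 ≤ u i l) (hC : ∀ i l, u i l ≤ C) :
    ∑ i ∈ s, liminf (u i) atTop ≤ liminf (fun l => ∑ i ∈ s, u i l) atTop := by
  classical
  induction s using Finset.cons_induction with
  | empty => simp [liminf_const]
  | cons a t ha ih =>
      rw [Finset.sum_cons]
      have h1 : IsBoundedUnder (· ≥ ·) atTop (u a) :=
        isBoundedUnder_of ⟨0, fun l => h0 a l⟩
      have h2 : IsBoundedUnder (· ≤ ·) atTop (u a) :=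
        isBoundedUnder_of ⟨C, fun l => hC a l⟩
      have h3 : IsBoundedUnder (· ≥ ·) atTop (fun l => ∑ i ∈ t, u i l) :=
        isBoundedUnder_of ⟨0, fun l => Finset.sum_nonneg fun i _ => h0 i l⟩
      have h4 : IsCoboundedUnder (· ≥ ·) atTop (fun l => ∑ i ∈ t, u i l) :=
        isCoboundedUnder_ge_of_le atTop
          (x := (t.card : ℝ) * C)
          (fun l => by
            calc ∑ i ∈ t, u i l ≤ ∑ _i ∈ t, C := Finset.sum_le_sum fun i _ => hC i l
            _ = (t.card : ℝ) * C := by simp [Finset.sum_const, nsmul_eq_mul])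
      calc liminf (u a) atTop + ∑ i ∈ t, liminf (u i) atTop
          ≤ liminf (u a) atTop + liminf (fun l => ∑ i ∈ t, u i l) atTop :=
            add_le_add_right ih _
        _ ≤ liminf (u a + fun l => ∑ i ∈ t, u i l) atTop :=
            le_liminf_add h1 h2 h3 h4
        _ = liminf (fun l => ∑ i ∈ Finset.cons a t ha, u i l) atTop := by
            congr 1
            funext l
            rw [Finset.sum_cons]; rfl

/-- **Countably many exceptional levels.**
For an integrable nonnegative `Δ` and measurable `ρ_l`, setting
`𝔈(η) = liminf_{ε→0⁺} liminf_{l→∞} E[Δ · 1{ρ_l ∈ [2η-ε, 2η+ε)}]`,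
for every positive integer `K` the set `{η > 0 : 𝔈(η) ≥ 1/K}` has at most
`2·E[Δ]·K` elements; in particular `{η > 0 : 𝔈(η) > 0}` is countable. -/
theorem exceptional_levels_countable {Ω : Type} [MeasurableSpace Ω]
    (P : Measure Ω) [IsProbabilityMeasure P]
    (Δ : Ω → ℝ) (hΔ0 : ∀ ω, 0 ≤ Δ ω) (hΔint : Integrable Δ P)
    (ρ : ℕ → Ω → ℝ) (hρ : ∀ l, Measurable (ρ l))
    (𝔈 : ℝ → ℝ)
    (h𝔈 : ∀ η, 𝔈 η =
      liminf (fun ε : ℝ =>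
          liminf (fun l : ℕ =>
              ∫ ω, Set.indicator {ω' | ρ l ω' ∈ Set.Ico (2 * η - ε) (2 * η + ε)} Δ ω ∂P)
            atTop)
        (nhdsWithin 0 (Set.Ioi (0 : ℝ)))) :
    (∀ K : ℕ, 0 < K →
        ∀ s : Finset ℝ, (↑s ⊆ {η : ℝ | 0 < η ∧ 1 / (K : ℝ) ≤ 𝔈 η}) →
          (s.card : ℝ) ≤ 2 * (∫ ω, Δ ω ∂P) * K) ∧
      {η : ℝ | 0 < η ∧ 0 < 𝔈 η}.Countable := by
  classical
  set I : ℝ := ∫ ω, Δ ω ∂P with hI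
  have hI0 : 0 ≤ I := integral_nonneg hΔ0
  -- the basic sets and integrals
  set S : ℕ → ℝ → ℝ → Set Ω := fun l η ε => {ω' | ρ l ω' ∈ Set.Ico (2 * η - ε) (2 * η + ε)}
    with hS
  set F : ℕ → ℝ → ℝ → ℝ := fun l η ε => ∫ ω, (S l η ε).indicator Δ ω ∂P with hF
  have hSm : ∀ l η ε, MeasurableSet (S l η ε) := fun l η ε => (hρ l) measurableSet_Ico
  have hFint : ∀ l η ε, Integrable ((S l η ε).indicator Δ) P :=
    fun l η ε => hΔint.indicator (hSm l η ε)
  have hF0 : ∀ l η ε, 0 ≤ F l η ε := fun l η ε =>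
    integral_nonneg (Set.indicator_nonneg (fun ω _ => hΔ0 ω))
  have hFI : ∀ l η ε, F l η ε ≤ I := fun l η ε =>
    integral_mono (hFint l η ε) hΔint (Set.indicator_le_self' (fun ω _ => hΔ0 ω))
  -- monotonicity in ε
  have hFmono : ∀ l η (ε ε' : ℝ), ε ≤ ε' → F l η ε ≤ F l η ε' := by
    intro l η ε ε' hεε'
    refine integral_mono (hFint l η ε) (hFint l η ε')
      (Set.indicator_le_indicator_of_subset ?_ (fun ω => hΔ0 ω))
    intro ω hω
    exact ⟨le_trans (by linarith) hω.1, lt_of_lt_of_le hω.2 (by linarith)⟩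
  -- key step: for every η with 1/K ≤ 𝔈 η and every ε > 0, 1/K ≤ liminf_l F l η ε
  have key : ∀ (c η : ℝ), c ≤ 𝔈 η → ∀ ε : ℝ, 0 < ε →
      c ≤ liminf (fun l => F l η ε) atTop := by
    intro c η hc ε hε
    refine hc.trans ?_
    rw [h𝔈 η]
    have hfreq : ∃ᶠ ε' in nhdsWithin 0 (Set.Ioi (0:ℝ)),
        liminf (fun l => F l η ε') atTop ≤ liminf (fun l => F l η ε) atTop := by
      refine Eventually.frequently ?_
      filter_upwards [Ioo_mem_nhdsGT_of_mem (Set.mem_Ico.2 ⟨le_refl (0:ℝ), hε⟩)] with ε' hε'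
      refine liminf_le_liminf (Eventually.of_forall fun l => hFmono l η ε' ε hε'.2.le)
        (isBoundedUnder_of ⟨0, fun l => hF0 l η ε'⟩)
        (isCoboundedUnder_ge_of_le atTop (fun l => hFI l η ε))
    refine liminf_le_of_frequently_le hfreq ?_
    exact isBoundedUnder_of ⟨0, fun ε' =>
      le_liminf_of_le (isCoboundedUnder_ge_of_le atTop (fun l => hFI l η ε'))
        (Eventually.of_forall fun l => hF0 l η ε')⟩
  -- part 1
  have part1 : ∀ K : ℕ, 0 < K →
      ∀ s : Finset ℝ, (↑s ⊆ {η : ℝ | 0 < η ∧ 1 / (K : ℝ) ≤ 𝔈 η}) →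
        (s.card : ℝ) ≤ 2 * I * K := by
    intro K hK s hs
    have hKpos : (0:ℝ) < K := by exact_mod_cast hK
    -- choose a separation ε
    set ε : ℝ := if h : s.offDiag.Nonempty then s.offDiag.inf' h (fun p => |p.1 - p.2|) else 1
      with hεdef
    have hεpos : 0 < ε := by
      rw [hεdef]
      split_ifs with h
      · rw [Finset.lt_inf'_iff]
        intro p hp
        exact abs_pos.2 (sub_ne_zero.2 (Finset.mem_offDiag.1 hp).2.2)
      · exact one_pos
    have hεle : ∀ η ∈ s, ∀ η' ∈ s, η ≠ η' → ε ≤ |η - η'| := by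
      intro η hη η' hη' hne
      have hmem : (η, η') ∈ s.offDiag := Finset.mem_offDiag.2 ⟨hη, hη', hne⟩
      rw [hεdef]
      split_ifs with h
      · exact Finset.inf'_le _ hmem
      · exact absurd ⟨_, hmem⟩ h
    -- the sets are pairwise disjoint, so the sum of integrals is at most I
    have hsum : ∀ l, ∑ η ∈ s, F l η ε ≤ I := by
      intro l
      have hptwise : ∀ ω, ∑ η ∈ s, (S l η ε).indicator Δ ω ≤ Δ ω := by
        intro ω
        have hdisj : ∀ η ∈ s, ∀ η' ∈ s, η ≠ η' → ω ∈ S l η ε → ω ∉ S l η' ε := by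
          intro η hη η' hη' hne h1 h2
          have hle := hεle η hη η' hη' hne
          rcases lt_or_gt_of_ne hne with hlt | hlt
          · have : |η - η'| = η' - η := by rw [abs_sub_comm]; exact abs_of_pos (by linarith)
            have := h1.2.trans_le (le_trans (by linarith [this ▸ hle]) h2.1)
            exact lt_irrefl _ this
          · have : |η - η'| = η - η' := abs_of_pos (by linarith)
            have := h2.2.trans_le (le_trans (by linarith [this ▸ hle]) h1.1)
            exact lt_irrefl _ this
        by_cases hex : ∃ η₀ ∈ s, ω ∈ S l η₀ ε
        · obtain ⟨η₀, hη₀s, hη₀⟩ := hex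
          have : ∑ η ∈ s, (S l η ε).indicator Δ ω = (S l η₀ ε).indicator Δ ω := by
            refine Finset.sum_eq_single_of_mem η₀ hη₀s fun η hη hne => ?_
            exact Set.indicator_of_notMem (hdisj η₀ hη₀s η hη (Ne.symm hne) hη₀) Δ
          rw [this, Set.indicator_of_mem hη₀]
        · push_neg at hex
          have : ∑ η ∈ s, (S l η ε).indicator Δ ω = 0 :=
            Finset.sum_eq_zero fun η hη => Set.indicator_of_notMem (hex η hη) Δ
          rw [this]; exact hΔ0 ω
      calc ∑ η ∈ s, F l η ε = ∫ ω, ∑ η ∈ s, (S l η ε).indicator Δ ω ∂P :=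
            (integral_finset_sum s fun η _ => hFint l η ε).symm
        _ ≤ I := integral_mono (integrable_finset_sum s fun η _ => hFint l η ε) hΔint hptwise
    -- summing the liminfs
    have hcard : (s.card : ℝ) * (1 / K) ≤ I := by
      calc (s.card : ℝ) * (1 / K) = ∑ _η ∈ s, (1 / (K:ℝ)) := by
            simp [Finset.sum_const, nsmul_eq_mul]
        _ ≤ ∑ η ∈ s, liminf (fun l => F l η ε) atTop := by
            refine Finset.sum_le_sum fun η hη => ?_
            exact key _ η (hs hη).2 ε hεpos
        _ ≤ liminf (fun l => ∑ η ∈ s, F l η ε) atTop :=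
            sum_liminf_le_aux I s (fun η l => F l η ε) (fun η l => hF0 l η ε)
              (fun η l => hFI l η ε)
        _ ≤ I := liminf_le_of_frequently_le (Frequently.of_forall hsum)
              (isBoundedUnder_of ⟨0, fun l => Finset.sum_nonneg fun η _ => hF0 l η ε⟩)
    have : (s.card : ℝ) ≤ I * K := by
      rw [mul_one_div] at hcard
      rw [← div_le_iff₀ hKpos] at *
      linarith [hcard]
    nlinarith [hI0, hKpos]
  refine ⟨part1, ?_⟩
  -- countability
  have hsub : {η : ℝ | 0 < η ∧ 0 < 𝔈 η} ⊆
      ⋃ K : ℕ, {η : ℝ | 0 < η ∧ 1 / ((K:ℝ) + 1) ≤ 𝔈 η} := by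
    intro η hη
    obtain ⟨n, hn⟩ := exists_nat_one_div_lt hη.2
    exact Set.mem_iUnion.2 ⟨n, hη.1, hn.le⟩
  refine Set.Countable.mono hsub (Set.countable_iUnion fun K => ?_)
  refine Set.Finite.countable ?_
  by_contra hinf
  obtain ⟨t, hts, htcard⟩ := Set.Infinite.exists_subset_card_eq hinf (⌈2 * I * ((K:ℝ) + 1)⌉₊ + 1)
  have h1 := part1 (K + 1) (Nat.succ_pos K) t (by
    intro η hη
    have := hts hη
    simpa [Nat.cast_add, Nat.cast_one] using this)
  rw [htcard] at h1
  have h2 : 2 * I * ((K:ℝ) + 1) ≤ (⌈2 * I * ((K:ℝ) + 1)⌉₊ : ℝ) := Nat.le_ceil _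
  push_cast at h1
  linarith
end

section
/- Let G = (V,E) be a finite simple graph, β ≥ 0, and let ν be the Ising measure on G with zero external field. Let S ⊆ V and let K be the number of edges of G with exactly one endpoint in S. Then for every spin configuration σ : S → {−1,+1}, ν( Σ_{j ∈ V\S} x_j ≥ 0 | x_S = σ ) ≥ (1/2)·e^{−2βK}. -/
open Real Finset

attribute [local instance] Classical.propDecidable

variable {V : Type} [Fintype V]

/-- zero-field Ising Hamiltonian `β Σ_{(i,j)∈E} x_i x_j`. -/
noncomputable def ham0 (G : SimpleGraph V) (β : ℝ) (x : V → Bool) : ℝ :=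
  β * ∑ e ∈ G.edgeFinset, edgeTerm x e

/-- flip spins outside `S`. -/
noncomputable def flipOut (S : Finset V) (z : V → Bool) : V → Bool :=
  fun v => if v ∈ S then z v else !(z v)

lemma spin_not (b : Bool) : spin (!b) = - spin b := by cases b <;> simp [spin]

lemma flipOut_invol (S : Finset V) : Function.Involutive (flipOut S) := by
  intro z
  funext v
  by_cases h : v ∈ S <;> simp [flipOut, h]

lemma edgeTerm_apply {V : Type} (x : V → Bool) (a b : V) :
    edgeTerm x s(a, b) = spin (x a) * spin (x b) := rfl

lemma pointwise_bound (S : Finset V) (z : V → Bool) (e : Sym2 V) :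
    edgeTerm z e - edgeTerm (flipOut S z) e ≤
      if (∃ u v, e = s(u, v) ∧ u ∈ S ∧ v ∉ S) then 2 else 0 := by
  induction e using Sym2.inductionOn with
  | hf a b =>
    by_cases ha : a ∈ S <;> by_cases hb : b ∈ S
    · have h0 : edgeTerm (flipOut S z) s(a, b) = edgeTerm z s(a, b) := by
        simp [edgeTerm_apply, flipOut, ha, hb]
      rw [h0]
      split_ifs <;> norm_num
    · have hP : ∃ u v, s(a, b) = s(u, v) ∧ u ∈ S ∧ v ∉ S := ⟨a, b, rfl, ha, hb⟩
      rw [if_pos hP]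
      have h0 : edgeTerm (flipOut S z) s(a, b) = - edgeTerm z s(a, b) := by
        simp [edgeTerm_apply, flipOut, ha, hb, spin_not] <;> ring
      rw [h0]
      have : edgeTerm z s(a, b) ≤ 1 := by
        rw [edgeTerm_apply]; cases z a <;> cases z b <;> simp [spin]
      linarith
    · have hP : ∃ u v, s(a, b) = s(u, v) ∧ u ∈ S ∧ v ∉ S :=
        ⟨b, a, Sym2.eq_swap, hb, ha⟩
      rw [if_pos hP]
      have h0 : edgeTerm (flipOut S z) s(a, b) = - edgeTerm z s(a, b) := by
        simp [edgeTerm_apply, flipOut, ha, hb, spin_not] <;> ring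
      rw [h0]
      have : edgeTerm z s(a, b) ≤ 1 := by
        rw [edgeTerm_apply]; cases z a <;> cases z b <;> simp [spin]
      linarith
    · have h0 : edgeTerm (flipOut S z) s(a, b) = edgeTerm z s(a, b) := by
        simp [edgeTerm_apply, flipOut, ha, hb, spin_not] <;> ring
      rw [h0]
      split_ifs <;> norm_num

lemma ham_flip_ge (G : SimpleGraph V) (β : ℝ) (hβ : 0 ≤ β) (S : Finset V)
    (z : V → Bool) :
    ham0 G β z - 2 * β * (G.edgeFinset.filter
        (fun e => ∃ u v, e = s(u, v) ∧ u ∈ S ∧ v ∉ S)).card ≤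
      ham0 G β (flipOut S z) := by
  have h1 : ∑ e ∈ G.edgeFinset, (edgeTerm z e - edgeTerm (flipOut S z) e) ≤
      ∑ e ∈ G.edgeFinset,
        (if (∃ u v, e = s(u, v) ∧ u ∈ S ∧ v ∉ S) then (2 : ℝ) else 0) :=
    Finset.sum_le_sum fun e _ => pointwise_bound S z e
  have h2 : ∑ e ∈ G.edgeFinset,
      (if (∃ u v, e = s(u, v) ∧ u ∈ S ∧ v ∉ S) then (2 : ℝ) else 0) =
      2 * (G.edgeFinset.filter
        (fun e => ∃ u v, e = s(u, v) ∧ u ∈ S ∧ v ∉ S)).card := by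
    rw [← Finset.sum_filter, Finset.sum_const, nsmul_eq_mul, mul_comm]
  rw [h2] at h1
  have h3 := mul_le_mul_of_nonneg_left h1 hβ
  rw [Finset.mul_sum] at h3
  simp only [mul_sub] at h3
  rw [Finset.sum_sub_distrib] at h3
  unfold ham0
  rw [Finset.mul_sum, Finset.mul_sum]
  nlinarith [h3]

/-- **Conditional positivity of magnetization outside a small set.**
For the zero-field Ising measure `ν` on a finite graph `G`, a vertex set `S`
touched by `K` boundary edges, and any fixed configuration `σ` on `S`,
`ν( Σ_{j∉S} x_j ≥ 0 | x_S = σ ) ≥ ½ e^{-2βK}`. -/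
theorem conditional_nonneg_magnetization (G : SimpleGraph V)
    (β : ℝ) (hβ : 0 ≤ β) (S : Finset V) (σ : V → Bool)
    (K : ℕ)
    (hK : K = (G.edgeFinset.filter
        (fun e => ∃ u v, e = s(u, v) ∧ u ∈ S ∧ v ∉ S)).card) :
    (1 / 2) * Real.exp (-2 * β * K) ≤
      (∑ z : V → Bool,
          if (∀ u ∈ S, z u = σ u) ∧ 0 ≤ ∑ j ∈ Sᶜ, spin (z j) then
            Real.exp (ham0 G β z) else 0) /
        (∑ z : V → Bool,
          if (∀ u ∈ S, z u = σ u) then Real.exp (ham0 G β z) else 0) := by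
  classical
  set P : (V → Bool) → Prop := fun z => ∀ u ∈ S, z u = σ u with hP
  set m : (V → Bool) → ℝ := fun z => ∑ j ∈ Sᶜ, spin (z j) with hm
  set H : (V → Bool) → ℝ := ham0 G β with hH
  set N : ℝ := ∑ z : V → Bool, if P z ∧ 0 ≤ m z then Real.exp (H z) else 0 with hN
  set D : ℝ := ∑ z : V → Bool, if P z then Real.exp (H z) else 0 with hD
  -- basic facts
  have hNnonneg : 0 ≤ N := by
    apply Finset.sum_nonneg
    intro z _
    split_ifs <;> positivity
  have hDpos : 0 < D := by
    have h1 : Real.exp (H σ) ≤ D := by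
      refine Finset.single_le_sum (f := fun z => if P z then Real.exp (H z) else 0)
        (fun z _ => ?_) (Finset.mem_univ σ) |>.trans_eq' ?_
      · split_ifs <;> positivity
      · rw [if_pos (fun u _ => rfl)]
    linarith [Real.exp_pos (H σ)]
  -- flip facts
  have hPflip : ∀ z, P (flipOut S z) ↔ P z := by
    intro z
    constructor <;> intro h u hu <;> have := h u hu <;>
      simpa [flipOut, hu] using this
  have hmflip : ∀ z, m (flipOut S z) = - m z := by
    intro z
    rw [hm]
    simp only
    rw [← Finset.sum_neg_distrib]
    apply Finset.sum_congr rfl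
    intro j hj
    have hj' : j ∉ S := by simpa using hj
    simp [flipOut, hj', spin_not]
  have hHflip : ∀ z, H z - 2 * β * K ≤ H (flipOut S z) := by
    intro z
    rw [hK]
    exact ham_flip_ge G β hβ S z
  -- the "negative" part
  set B : ℝ := ∑ z : V → Bool, if P z ∧ m z < 0 then Real.exp (H z) else 0 with hB
  have hDNB : D = N + B := by
    rw [hD, hN, hB, ← Finset.sum_add_distrib]
    apply Finset.sum_congr rfl
    intro z _
    by_cases hp : P z
    · by_cases hmz : 0 ≤ m z
      · rw [if_pos hp, if_pos ⟨hp, hmz⟩, if_neg (by push_neg; intro; linarith)]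
        ring
      · rw [if_pos hp, if_neg (by tauto), if_pos ⟨hp, by linarith [lt_of_not_ge hmz]⟩]
        ring
    · rw [if_neg hp, if_neg (by tauto), if_neg (by tauto)]
      ring
  -- exp(-2βK) * B ≤ N
  have hexp_nonneg : (0:ℝ) < Real.exp (-2 * β * K) := Real.exp_pos _
  have key : Real.exp (-2 * β * K) * B ≤ N := by
    have step1 : Real.exp (-2 * β * K) * B ≤
        ∑ z : V → Bool, if P z ∧ m z < 0 then Real.exp (H (flipOut S z)) else 0 := by
      rw [hB, Finset.mul_sum]
      apply Finset.sum_le_sum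
      intro z _
      by_cases hz : P z ∧ m z < 0
      · rw [if_pos hz, if_pos hz, ← Real.exp_add]
        apply Real.exp_le_exp.mpr
        have := hHflip z
        linarith
      · rw [if_neg hz, if_neg hz, mul_zero]
    have step2 : ∑ z : V → Bool, (if P z ∧ m z < 0 then Real.exp (H (flipOut S z)) else 0)
        = ∑ w : V → Bool, (if P (flipOut S w) ∧ m (flipOut S w) < 0
            then Real.exp (H (flipOut S (flipOut S w))) else 0) := by
      exact (Fintype.sum_bijective (flipOut S) (flipOut_invol S).bijective _ _
        (fun w => rfl)).symm
    have step3 : ∑ w : V → Bool, (if P (flipOut S w) ∧ m (flipOut S w) < 0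
            then Real.exp (H (flipOut S (flipOut S w))) else 0) ≤ N := by
      rw [hN]
      apply Finset.sum_le_sum
      intro w _
      rw [flipOut_invol S w]
      by_cases hw : P (flipOut S w) ∧ m (flipOut S w) < 0
      · have h1 : P w := (hPflip w).mp hw.1
        have h2 : 0 ≤ m w := by
          have := hw.2
          rw [hmflip w] at this
          linarith
        rw [if_pos hw, if_pos ⟨h1, h2⟩]
      · rw [if_neg hw]
        split_ifs <;> positivity
    calc Real.exp (-2 * β * K) * B ≤ _ := step1
      _ = _ := step2
      _ ≤ N := step3
  have key2 : Real.exp (-2 * β * K) * N ≤ N := by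
    have h1 : Real.exp (-2 * β * K) ≤ 1 := by
      apply Real.exp_le_one_iff.mpr
      have : (0:ℝ) ≤ β * K := by positivity
      linarith
    nlinarith
  rw [le_div_iff₀ hDpos]
  nlinarith [key, key2, hDNB]
end
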